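/- arXiv:1009.3883 — 8 statements merged into one kernel-verified Lean document; each statement's English description precedes it below -/
import Mathlib

section
/- Let k ∈ ℝ and let f be the constant function f ≡ k on the grid {a, a+1, a+2, …}. Then for all α > 0, β > 0, γ ∈ [0,1], and every n ∈ ℕ with t = a + n, (_γ◇_a^{−α,−β} f)(t) = γ·Γ(n+1+α)·k/(Γ(α+1)·Γ(n+1)) + (1−γ)·Γ(n+1+β)·k/(Γ(β+1)·Γ(n+1)) (note t − a + 1 = n + 1). -/
open Finset

/-- Falling factorial function `t^(ν) = Γ(t+1)/Γ(t+1-ν)` (with the convention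
`1/Γ(z) = 0` for `z` a nonpositive integer, automatic since `Real.Gamma`
vanishes there and division by zero is zero). -/
noncomputable def fall (t ν : ℝ) : ℝ := Real.Gamma (t + 1) / Real.Gamma (t + 1 - ν)

/-- Rising factorial function `t^↑ν = Γ(t+ν)/Γ(t)`. -/
noncomputable def rise (t ν : ℝ) : ℝ := Real.Gamma (t + ν) / Real.Gamma t

/-- Delta fractional sum `(Δ_a^{-ν} f)(t+ν)` at `t = a + n`. -/
noncomputable def deltaSum (a ν : ℝ) (f : ℝ → ℝ) (n : ℕ) : ℝ :=
  (1 / Real.Gamma ν) * ∑ j ∈ Finset.range (n + 1),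
    fall ((a + n) + ν - (a + j) - 1) (ν - 1) * f (a + j)

/-- Nabla fractional sum `(∇_a^{-ν} f)(t)` at `t = a + n`. -/
noncomputable def nablaSum (a ν : ℝ) (f : ℝ → ℝ) (n : ℕ) : ℝ :=
  (1 / Real.Gamma ν) * ∑ j ∈ Finset.range (n + 1),
    rise ((a + n) - (a + j) + 1) (ν - 1) * f (a + j)

/-- Diamond-γ fractional sum of order (α, β) at `t = a + n`. -/
noncomputable def diamond (γ a α β : ℝ) (f : ℝ → ℝ) (n : ℕ) : ℝ :=
  γ * deltaSum a α f n + (1 - γ) * nablaSum a β f n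

/-- Backward difference `(∇ g)(t) = g(t) - g(t-1)`; `bdiff^[k]` is `∇^k`. -/
noncomputable def bdiff (g : ℝ → ℝ) : ℝ → ℝ := fun t => g t - g (t - 1)

/-- Generalized binomial coefficient `binom(u,v) = Γ(u+1)/(Γ(v+1)Γ(u-v+1))`. -/
noncomputable def binomR (u v : ℝ) : ℝ :=
  Real.Gamma (u + 1) / (Real.Gamma (v + 1) * Real.Gamma (u - v + 1))

lemma sum1 (ν : ℝ) (hν : 0 < ν) (n : ℕ) :
    ∑ m ∈ Finset.range (n + 1), Real.Gamma ((m : ℝ) + ν) / Real.Gamma ((m : ℝ) + 1)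
      = Real.Gamma ((n : ℝ) + 1 + ν) / (ν * Real.Gamma ((n : ℝ) + 1)) := by
  induction n with
  | zero =>
    simp only [Nat.cast_zero, zero_add, Finset.sum_range_one, Real.Gamma_one]
    rw [add_comm (1:ℝ) ν, Real.Gamma_add_one hν.ne']
    field_simp
  | succ n ih =>
    rw [Finset.sum_range_succ, ih]
    have h1 : Real.Gamma ((n : ℝ) + 1) ≠ 0 :=
      (Real.Gamma_pos_of_pos (by positivity)).ne'
    have hrec1 : Real.Gamma (((n : ℝ) + 1) + 1) = ((n : ℝ) + 1) * Real.Gamma ((n : ℝ) + 1) :=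
      Real.Gamma_add_one (by positivity)
    have hrec2 : Real.Gamma (((n : ℝ) + 1 + ν) + 1) = ((n : ℝ) + 1 + ν) * Real.Gamma ((n : ℝ) + 1 + ν) :=
      Real.Gamma_add_one (by positivity)
    push_cast
    rw [show (n : ℝ) + 1 + 1 + ν = ((n : ℝ) + 1 + ν) + 1 by ring, hrec2, hrec1]
    field_simp

lemma sum2 (ν : ℝ) (hν : 0 < ν) (n : ℕ) :
    ∑ j ∈ Finset.range (n + 1), Real.Gamma ((n : ℝ) - (j : ℝ) + ν) / Real.Gamma ((n : ℝ) - (j : ℝ) + 1)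
      = Real.Gamma ((n : ℝ) + 1 + ν) / (ν * Real.Gamma ((n : ℝ) + 1)) := by
  rw [← sum1 ν hν n, ← Finset.sum_range_reflect]
  refine Finset.sum_congr rfl fun j hj => ?_
  have hj' : j ≤ n := Nat.lt_succ_iff.mp (Finset.mem_range.mp hj)
  have : ((n + 1 - 1 - j : ℕ) : ℝ) = (n : ℝ) - j := by
    simp only [Nat.add_sub_cancel]
    push_cast [Nat.cast_sub hj']
    ring
  rw [this]; ring_nf

lemma key (ν k : ℝ) (hν : 0 < ν) (n : ℕ) :
    (1 / Real.Gamma ν) * ∑ j ∈ Finset.range (n + 1),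
        Real.Gamma ((n : ℝ) - (j : ℝ) + ν) / Real.Gamma ((n : ℝ) - (j : ℝ) + 1) * k
      = Real.Gamma ((n : ℝ) + 1 + ν) * k / (Real.Gamma (ν + 1) * Real.Gamma ((n : ℝ) + 1)) := by
  rw [← Finset.sum_mul, sum2 ν hν n, Real.Gamma_add_one hν.ne']
  have h1 : Real.Gamma ν ≠ 0 := (Real.Gamma_pos_of_pos hν).ne'
  have h2 : Real.Gamma ((n : ℝ) + 1) ≠ 0 := (Real.Gamma_pos_of_pos (by positivity)).ne'
  field_simp

/-- diamond-γ fractional sum of a constant function. -/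
theorem diamond_const (a α β γ k : ℝ) (hα : 0 < α) (hβ : 0 < β)
    (hγ : γ ∈ Set.Icc (0 : ℝ) 1) (n : ℕ) :
    diamond γ a α β (fun _ => k) n
      = γ * (Real.Gamma ((n : ℝ) + 1 + α) * k / (Real.Gamma (α + 1) * Real.Gamma ((n : ℝ) + 1)))
        + (1 - γ) * (Real.Gamma ((n : ℝ) + 1 + β) * k
            / (Real.Gamma (β + 1) * Real.Gamma ((n : ℝ) + 1))) := by
  have hd : deltaSum a α (fun _ => k) n
      = Real.Gamma ((n : ℝ) + 1 + α) * k / (Real.Gamma (α + 1) * Real.Gamma ((n : ℝ) + 1)) := by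
    rw [← key α k hα n]
    unfold deltaSum fall
    congr 1
    refine Finset.sum_congr rfl fun j _ => ?_
    have e1 : (a + (n : ℝ)) + α - (a + (j : ℝ)) - 1 + 1 = (n : ℝ) - j + α := by ring
    have e2 : (n : ℝ) - j + α - (α - 1) = (n : ℝ) - j + 1 := by ring
    rw [e1, e2]
  have hn : nablaSum a β (fun _ => k) n
      = Real.Gamma ((n : ℝ) + 1 + β) * k / (Real.Gamma (β + 1) * Real.Gamma ((n : ℝ) + 1)) := by
    rw [← key β k hβ n]
    unfold nablaSum rise
    congr 1
    refine Finset.sum_congr rfl fun j _ => ?_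
    have e1 : (a + (n : ℝ)) - (a + (j : ℝ)) + 1 + (β - 1) = (n : ℝ) - j + β := by ring
    have e2 : (a + (n : ℝ)) - (a + (j : ℝ)) + 1 = (n : ℝ) - j + 1 := by ring
    rw [e1, e2]
  rw [diamond, hd, hn]
end

section
/- Let f be a real function on the grid {a, a+1, a+2, …}, let α₁, α₂, β₁, β₂ > 0 and γ ∈ [0,1]. Let F be the grid function F(a+m) := (_γ◇_a^{−α₂,−β₂} f)(a+m) for m ∈ ℕ. Then for every n ∈ ℕ with t = a + n, (_γ◇_a^{−α₁,−β₁} F)(t) = γ·(_γ◇_a^{−(α₁+α₂),−(β₁+α₂)} f)(t) + (1−γ)·(_γ◇_a^{−(α₁+β₂),−(β₁+β₂)} f)(t). -/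
open Finset

/-- Rising factorial `x(x+1)⋯(x+k-1)`. -/
noncomputable def rr (x : ℝ) : ℕ → ℝ
  | 0 => 1
  | k + 1 => rr x k * (x + k)

lemma rr_gamma (x : ℝ) (hx : 0 < x) : ∀ k : ℕ, Real.Gamma (x + k) = rr x k * Real.Gamma x
  | 0 => by simp [rr]
  | k + 1 => by
    have h1 : x + (k + 1 : ℕ) = (x + k) + 1 := by push_cast; ring
    have h2 : (x + (k : ℝ)) ≠ 0 := by positivity
    rw [h1, Real.Gamma_add_one h2, rr_gamma x hx k, rr]; ring

lemma rr_vand (x y : ℝ) : ∀ k : ℕ,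
    ∑ i ∈ range (k + 1), (k.choose i : ℝ) * (rr x i * rr y (k - i)) = rr (x + y) k
  | 0 => by simp [rr]
  | k + 1 => by
    have hAB : ∑ i ∈ range (k + 2), ((k+1).choose i : ℝ) * (rr x i * rr y (k + 1 - i))
        = (∑ i ∈ range (k + 1), ((k+1).choose (i+1) : ℝ) * (rr x (i+1) * rr y (k - i)))
          + rr y (k + 1) := by
      rw [Finset.sum_range_succ']
      congr 1
      · refine Finset.sum_congr rfl fun i hi => ?_
        have : k + 1 - (i + 1) = k - i := by omega
        rw [this]
      · simp [rr]
    have hsplit : ∀ i ∈ range (k + 1),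
        ((k+1).choose (i+1) : ℝ) * (rr x (i+1) * rr y (k - i))
          = (k.choose i : ℝ) * (rr x (i+1) * rr y (k - i))
            + (k.choose (i+1) : ℝ) * (rr x (i+1) * rr y (k - i)) := by
      intro i _
      rw [Nat.choose_succ_succ]
      push_cast
      ring
    have hD : (∑ i ∈ range (k + 1), (k.choose (i+1) : ℝ) * (rr x (i+1) * rr y (k - i)))
        + rr y (k + 1)
        = ∑ i ∈ range (k + 1), (k.choose i : ℝ) * (rr x i * rr y (k + 1 - i)) := by
      have h1 : ∑ i ∈ range (k + 2), (k.choose i : ℝ) * (rr x i * rr y (k + 1 - i))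
          = (∑ i ∈ range (k + 1), (k.choose (i+1) : ℝ) * (rr x (i+1) * rr y (k + 1 - (i+1))))
            + rr y (k + 1) := by
        rw [Finset.sum_range_succ']; simp [rr]
      have h2 : ∑ i ∈ range (k + 2), (k.choose i : ℝ) * (rr x i * rr y (k + 1 - i))
          = ∑ i ∈ range (k + 1), (k.choose i : ℝ) * (rr x i * rr y (k + 1 - i)) := by
        rw [Finset.sum_range_succ, Nat.choose_succ_self]; simp
      rw [← h2, h1]
      congr 1
      refine Finset.sum_congr rfl fun i hi => ?_
      have : k + 1 - (i + 1) = k - i := by omega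
      rw [this]
    have hmerge : ∀ i ∈ range (k + 1),
        (k.choose i : ℝ) * (rr x (i+1) * rr y (k - i))
          + (k.choose i : ℝ) * (rr x i * rr y (k + 1 - i))
          = ((k.choose i : ℝ) * (rr x i * rr y (k - i))) * (x + y + k) := by
      intro i hi
      have hik : i ≤ k := by simpa [Nat.lt_succ_iff] using hi
      have h1 : k + 1 - i = (k - i) + 1 := by omega
      have h2 : ((k - i : ℕ) : ℝ) = (k : ℝ) - i := by
        push_cast [hik]; ring
      rw [h1]
      show (k.choose i : ℝ) * (rr x i * (x + i) * rr y (k - i))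
          + (k.choose i : ℝ) * (rr x i * (rr y (k - i) * (y + ((k - i : ℕ) : ℝ)))) = _
      rw [h2]; ring
    calc ∑ i ∈ range (k + 2), ((k+1).choose i : ℝ) * (rr x i * rr y (k + 1 - i))
        = (∑ i ∈ range (k + 1), ((k.choose i : ℝ) * (rr x (i+1) * rr y (k - i))
            + (k.choose (i+1) : ℝ) * (rr x (i+1) * rr y (k - i)))) + rr y (k + 1) := by
          rw [hAB]; congr 1; exact Finset.sum_congr rfl hsplit
      _ = (∑ i ∈ range (k + 1), (k.choose i : ℝ) * (rr x (i+1) * rr y (k - i)))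
            + ((∑ i ∈ range (k + 1), (k.choose (i+1) : ℝ) * (rr x (i+1) * rr y (k - i)))
            + rr y (k + 1)) := by rw [Finset.sum_add_distrib]; ring
      _ = ∑ i ∈ range (k + 1), ((k.choose i : ℝ) * (rr x (i+1) * rr y (k - i))
            + (k.choose i : ℝ) * (rr x i * rr y (k + 1 - i))) := by
          rw [hD, Finset.sum_add_distrib]
      _ = ∑ i ∈ range (k + 1), ((k.choose i : ℝ) * (rr x i * rr y (k - i))) * (x + y + k) :=
          Finset.sum_congr rfl hmerge
      _ = rr (x + y) (k + 1) := by
          rw [← Finset.sum_mul, rr_vand x y k]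
          show rr (x + y) k * (x + y + k) = rr (x + y) k * ((x + y) + k)
          ring



/-- Normalized kernel coefficient `Γ(k+ν)/(Γ(ν) k!)`. -/
noncomputable def cc (ν : ℝ) (k : ℕ) : ℝ := rr ν k / k.factorial

lemma cc_conv (x y : ℝ) (k : ℕ) :
    ∑ i ∈ range (k + 1), cc x i * cc y (k - i) = cc (x + y) k := by
  rw [cc, ← rr_vand x y k, Finset.sum_div]
  refine Finset.sum_congr rfl fun i hi => ?_
  have hik : i ≤ k := by simpa [Nat.lt_succ_iff] using hi
  have hfac : (k.choose i : ℝ) = (k.factorial : ℝ) / (i.factorial * (k - i).factorial) := by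
    rw [eq_div_iff (by positivity)]
    rw [← Nat.cast_mul, ← Nat.cast_mul, ← Nat.choose_mul_factorial_mul_factorial hik, mul_assoc]
  rw [cc, cc, hfac]
  have h1 : (k.factorial : ℝ) ≠ 0 := by positivity
  have h2 : (i.factorial : ℝ) ≠ 0 := by positivity
  have h3 : ((k - i).factorial : ℝ) ≠ 0 := by positivity
  field_simp







/-- The common value of the kernels: `Γ(ν+k)/Γ(k+1) = cc ν k * Γ ν`. -/
lemma kernel_eq (ν : ℝ) (hν : 0 < ν) (k : ℕ) :
    Real.Gamma (ν + k) / Real.Gamma ((k : ℝ) + 1) = cc ν k * Real.Gamma ν := by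
  have h1 : Real.Gamma ((k : ℝ) + 1) = k.factorial := by
    exact_mod_cast Real.Gamma_nat_eq_factorial k
  rw [h1, rr_gamma ν hν k, cc]
  field_simp

lemma deltaSum_eq (a ν : ℝ) (hν : 0 < ν) (f : ℝ → ℝ) (n : ℕ) :
    deltaSum a ν f n = ∑ j ∈ range (n + 1), cc ν (n - j) * f (a + j) := by
  have hΓ : Real.Gamma ν ≠ 0 := (Real.Gamma_pos_of_pos hν).ne'
  rw [deltaSum, Finset.mul_sum]
  refine Finset.sum_congr rfl fun j hj => ?_
  have hjn : j ≤ n := by simpa [Nat.lt_succ_iff] using hj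
  have hc : ((n - j : ℕ) : ℝ) = (n : ℝ) - j := by push_cast [hjn]; ring
  have h1 : (a + n) + ν - (a + j) - 1 + 1 = ν + ((n - j : ℕ) : ℝ) := by rw [hc]; ring
  have h2 : ν + ((n - j : ℕ) : ℝ) - (ν - 1) = ((n - j : ℕ) : ℝ) + 1 := by ring
  rw [fall, h1, h2, kernel_eq ν hν (n - j)]
  field_simp

lemma nablaSum_eq (a ν : ℝ) (hν : 0 < ν) (f : ℝ → ℝ) (n : ℕ) :
    nablaSum a ν f n = ∑ j ∈ range (n + 1), cc ν (n - j) * f (a + j) := by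
  have hΓ : Real.Gamma ν ≠ 0 := (Real.Gamma_pos_of_pos hν).ne'
  rw [nablaSum, Finset.mul_sum]
  refine Finset.sum_congr rfl fun j hj => ?_
  have hjn : j ≤ n := by simpa [Nat.lt_succ_iff] using hj
  have hc : ((n - j : ℕ) : ℝ) = (n : ℝ) - j := by push_cast [hjn]; ring
  have h1 : (a + n) - (a + j) + 1 + (ν - 1) = ν + ((n - j : ℕ) : ℝ) := by rw [hc]; ring
  have h2 : (a + n) - (a + j) + 1 = ((n - j : ℕ) : ℝ) + 1 := by rw [hc]; ring
  rw [rise, h1, h2, kernel_eq ν hν (n - j)]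
  field_simp

/-- Composition of the discrete convolution operators. -/
lemma comp_sum (x y : ℝ) (g : ℕ → ℝ) (n : ℕ) :
    ∑ j ∈ range (n + 1), cc x (n - j) * (∑ i ∈ range (j + 1), cc y (j - i) * g i)
      = ∑ i ∈ range (n + 1), cc (x + y) (n - i) * g i := by
  have h0 : ∀ m : ℕ, range (m + 1) = Finset.Ico 0 (m + 1) := fun m => by
    rw [Finset.range_eq_Ico]
  calc ∑ j ∈ range (n + 1), cc x (n - j) * (∑ i ∈ range (j + 1), cc y (j - i) * g i)
      = ∑ j ∈ Finset.Ico 0 (n + 1), ∑ i ∈ Finset.Ico 0 (j + 1),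
          cc x (n - j) * (cc y (j - i) * g i) := by
        rw [← h0]
        exact Finset.sum_congr rfl fun j _ => by rw [← h0, Finset.mul_sum]
    _ = ∑ i ∈ Finset.Ico 0 (n + 1), ∑ j ∈ Finset.Ico i (n + 1),
          cc x (n - j) * (cc y (j - i) * g i) := (Finset.sum_Ico_Ico_comm 0 (n+1) _).symm
    _ = ∑ i ∈ range (n + 1), cc (x + y) (n - i) * g i := by
        rw [← h0]
        refine Finset.sum_congr rfl fun i hi => ?_
        have hin : i ≤ n := by simpa [Nat.lt_succ_iff] using hi
        rw [Finset.sum_Ico_eq_sum_range]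
        have hlen : n + 1 - i = (n - i) + 1 := by omega
        rw [hlen]
        have : ∀ m ∈ range ((n - i) + 1),
            cc x (n - (i + m)) * (cc y ((i + m) - i) * g i)
              = (cc y m * cc x ((n - i) - m)) * g i := by
          intro m hm
          have : n - (i + m) = (n - i) - m := by omega
          rw [this, Nat.add_sub_cancel_left]
          ring
        rw [Finset.sum_congr rfl this, ← Finset.sum_mul, cc_conv y x (n - i)]
        rw [show y + x = x + y by ring]

/-- composition rule for the diamond-γ fractional sum. -/
theorem diamond_comp (a α₁ α₂ β₁ β₂ γ : ℝ)
    (hα₁ : 0 < α₁) (hα₂ : 0 < α₂) (hβ₁ : 0 < β₁) (hβ₂ : 0 < β₂)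
    (hγ : γ ∈ Set.Icc (0 : ℝ) 1) (f F : ℝ → ℝ)
    (hF : ∀ m : ℕ, F (a + m) = diamond γ a α₂ β₂ f m) (n : ℕ) :
    diamond γ a α₁ β₁ F n
      = γ * diamond γ a (α₁ + α₂) (β₁ + α₂) f n
        + (1 - γ) * diamond γ a (α₁ + β₂) (β₁ + β₂) f n := by
  set Sf : ℝ → ℕ → ℝ := fun ν m => ∑ j ∈ range (m + 1), cc ν (m - j) * f (a + j) with hSf
  have key : ∀ ν : ℝ, 0 < ν →
      ∑ j ∈ range (n + 1), cc ν (n - j) * F (a + j)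
        = γ * Sf (ν + α₂) n + (1 - γ) * Sf (ν + β₂) n := by
    intro ν hν
    have step : ∀ j ∈ range (n + 1),
        cc ν (n - j) * F (a + j)
          = γ * (cc ν (n - j) * ∑ i ∈ range (j + 1), cc α₂ (j - i) * f (a + i))
            + (1 - γ) * (cc ν (n - j) * ∑ i ∈ range (j + 1), cc β₂ (j - i) * f (a + i)) := by
      intro j _
      rw [hF j, diamond, deltaSum_eq a α₂ hα₂ f j, nablaSum_eq a β₂ hβ₂ f j]
      ring
    rw [Finset.sum_congr rfl step, Finset.sum_add_distrib, ← Finset.mul_sum, ← Finset.mul_sum,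
      comp_sum ν α₂ (fun i => f (a + i)) n, comp_sum ν β₂ (fun i => f (a + i)) n]
  have h1 : diamond γ a α₁ β₁ F n
      = γ * (γ * Sf (α₁ + α₂) n + (1 - γ) * Sf (α₁ + β₂) n)
        + (1 - γ) * (γ * Sf (β₁ + α₂) n + (1 - γ) * Sf (β₁ + β₂) n) := by
    rw [diamond, deltaSum_eq a α₁ hα₁ F n, nablaSum_eq a β₁ hβ₁ F n, key α₁ hα₁, key β₁ hβ₁]
  rw [h1, diamond, diamond,
    deltaSum_eq a (α₁ + α₂) (by linarith) f n, nablaSum_eq a (β₁ + α₂) (by linarith) f n,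
    deltaSum_eq a (α₁ + β₂) (by linarith) f n, nablaSum_eq a (β₁ + β₂) (by linarith) f n]
  ring
end

section
/- Semigroup property of the nabla fractional sum: let f be a real function on the grid {a, a+1, a+2, …} and β₁, β₂ > 0. Let G be the grid function G(a+m) := (∇_a^{−β₂} f)(a+m) for m ∈ ℕ. Then for every n ∈ ℕ with t = a + n, (∇_a^{−β₁} G)(t) = (∇_a^{−(β₁+β₂)} f)(t). -/
open Finset

lemma gamma_conv (β₁ β₂ : ℝ) (h1 : 0 < β₁) (h2 : 0 < β₂) : ∀ M : ℕ,
    ∑ i ∈ range (M+1), Real.Gamma (i+β₁)/(i.factorial : ℝ) *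
      (Real.Gamma (((M-i : ℕ) : ℝ)+β₂)/((M-i).factorial : ℝ))
    = Real.Gamma β₁ * Real.Gamma β₂ / Real.Gamma (β₁+β₂) *
      (Real.Gamma ((M:ℝ)+β₁+β₂)/(M.factorial : ℝ)) := by
  have hg12 : Real.Gamma (β₁+β₂) ≠ 0 := (Real.Gamma_pos_of_pos (by linarith)).ne'
  intro M
  induction M with
  | zero =>
      simp only [range_one, sum_singleton, Nat.cast_zero, Nat.sub_zero, Nat.factorial_zero,
        Nat.cast_one, zero_add]
      field_simp
  | succ M ih =>
      have hfac : ∀ k : ℕ, ((k.factorial : ℝ)) ≠ 0 := fun k => by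
        exact_mod_cast k.factorial_ne_zero
      have hrec : ((M:ℝ)+1) * (∑ i ∈ range (M+2), Real.Gamma (i+β₁)/(i.factorial : ℝ) *
          (Real.Gamma (((M+1-i : ℕ) : ℝ)+β₂)/((M+1-i).factorial : ℝ)))
          = ((M:ℝ)+β₁+β₂) * (∑ i ∈ range (M+1), Real.Gamma (i+β₁)/(i.factorial : ℝ) *
          (Real.Gamma (((M-i : ℕ) : ℝ)+β₂)/((M-i).factorial : ℝ))) := by
        rw [Finset.mul_sum, Finset.mul_sum]
        have split : ∀ i ∈ range (M+2),
            ((M:ℝ)+1) * (Real.Gamma (i+β₁)/(i.factorial : ℝ) *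
              (Real.Gamma (((M+1-i : ℕ) : ℝ)+β₂)/((M+1-i).factorial : ℝ)))
            = (i:ℝ) * (Real.Gamma (i+β₁)/(i.factorial : ℝ) *
              (Real.Gamma (((M+1-i : ℕ) : ℝ)+β₂)/((M+1-i).factorial : ℝ)))
            + (((M+1-i : ℕ)):ℝ) * (Real.Gamma (i+β₁)/(i.factorial : ℝ) *
              (Real.Gamma (((M+1-i : ℕ) : ℝ)+β₂)/((M+1-i).factorial : ℝ))) := by
          intro i hi
          rw [mem_range] at hi
          have : ((M+1-i : ℕ) : ℝ) = (M:ℝ)+1-(i:ℝ) := by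
            rw [Nat.cast_sub (by omega)]; push_cast; ring
          rw [this]; ring
        rw [Finset.sum_congr rfl split, Finset.sum_add_distrib]
        -- first sum
        have e1 : ∑ i ∈ range (M+2), (i:ℝ) * (Real.Gamma (i+β₁)/(i.factorial : ℝ) *
              (Real.Gamma (((M+1-i : ℕ) : ℝ)+β₂)/((M+1-i).factorial : ℝ)))
            = ∑ i ∈ range (M+1), ((i:ℝ)+β₁) * (Real.Gamma (i+β₁)/(i.factorial : ℝ) *
              (Real.Gamma (((M-i : ℕ) : ℝ)+β₂)/((M-i).factorial : ℝ))) := by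
          rw [Finset.sum_range_succ' (fun i => (i:ℝ) * (Real.Gamma (i+β₁)/(i.factorial : ℝ) *
              (Real.Gamma (((M+1-i : ℕ) : ℝ)+β₂)/((M+1-i).factorial : ℝ)))) (M+1)]
          simp only [Nat.cast_zero, zero_mul, add_zero]
          refine Finset.sum_congr rfl fun i hi => ?_
          rw [mem_range] at hi
          have hsub : M + 1 - (i+1) = M - i := by omega
          have hG : Real.Gamma ((i:ℝ)+1+β₁) = ((i:ℝ)+β₁) * Real.Gamma ((i:ℝ)+β₁) := by
            have := Real.Gamma_add_one (s := (i:ℝ)+β₁) (by positivity)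
            rw [← this]; ring_nf
          have hf : ((i+1).factorial : ℝ) = ((i:ℝ)+1) * (i.factorial : ℝ) := by
            rw [Nat.factorial_succ]; push_cast; ring
          rw [hsub]
          push_cast
          rw [hG, hf]
          field_simp
        -- second sum
        have e2 : ∑ i ∈ range (M+2), (((M+1-i : ℕ)):ℝ) * (Real.Gamma (i+β₁)/(i.factorial : ℝ) *
              (Real.Gamma (((M+1-i : ℕ) : ℝ)+β₂)/((M+1-i).factorial : ℝ)))
            = ∑ i ∈ range (M+1), (((M-i:ℕ):ℝ)+β₂) * (Real.Gamma (i+β₁)/(i.factorial : ℝ) *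
              (Real.Gamma (((M-i : ℕ) : ℝ)+β₂)/((M-i).factorial : ℝ))) := by
          rw [Finset.sum_range_succ]
          simp only [Nat.sub_self, Nat.cast_zero, zero_mul, add_zero]
          refine Finset.sum_congr rfl fun i hi => ?_
          rw [mem_range] at hi
          have hsub : M + 1 - i = (M - i) + 1 := by omega
          have hG : Real.Gamma (((M-i:ℕ):ℝ)+1+β₂) = (((M-i:ℕ):ℝ)+β₂) * Real.Gamma (((M-i:ℕ):ℝ)+β₂) := by
            have := Real.Gamma_add_one (s := ((M-i:ℕ):ℝ)+β₂) (by positivity)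
            rw [← this]; ring_nf
          have hf : (((M-i)+1).factorial : ℝ) = (((M-i:ℕ):ℝ)+1) * ((M-i).factorial : ℝ) := by
            rw [Nat.factorial_succ]; push_cast; ring
          rw [hsub]
          push_cast
          push_cast at hG hf
          rw [hG, hf]
          field_simp
        rw [e1, e2, ← Finset.sum_add_distrib]
        refine Finset.sum_congr rfl fun i hi => ?_
        rw [mem_range] at hi
        have : ((M-i:ℕ):ℝ) = (M:ℝ)-(i:ℝ) := by rw [Nat.cast_sub (by omega)]
        rw [this]; ring
      have hM1 : ((M:ℝ)+1) ≠ 0 := by positivity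
      have key2 : (∑ i ∈ range (M+2), Real.Gamma (i+β₁)/(i.factorial : ℝ) *
          (Real.Gamma (((M+1-i : ℕ) : ℝ)+β₂)/((M+1-i).factorial : ℝ)))
          = ((M:ℝ)+β₁+β₂)/((M:ℝ)+1) * (∑ i ∈ range (M+1), Real.Gamma (i+β₁)/(i.factorial : ℝ) *
          (Real.Gamma (((M-i : ℕ) : ℝ)+β₂)/((M-i).factorial : ℝ))) := by
        rw [div_mul_eq_mul_div, eq_div_iff hM1]
        linarith [hrec]
      have hGstep : Real.Gamma ((M:ℝ)+1+β₁+β₂) = ((M:ℝ)+β₁+β₂) * Real.Gamma ((M:ℝ)+β₁+β₂) := by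
        have := Real.Gamma_add_one (s := (M:ℝ)+β₁+β₂) (by positivity)
        rw [← this]; ring_nf
      have hfstep : ((M+1).factorial : ℝ) = ((M:ℝ)+1) * (M.factorial : ℝ) := by
        rw [Nat.factorial_succ]; push_cast; ring
      have hfac : ((M.factorial : ℝ)) ≠ 0 := by exact_mod_cast M.factorial_ne_zero
      rw [show M+1+1 = M+2 from rfl] at *
      rw [key2, ih]
      push_cast
      push_cast at hGstep hfstep
      rw [hGstep, hfstep]
      field_simp

lemma rise_eq (a ν : ℝ) (n j : ℕ) (h : j ≤ n) :
    rise ((a + n) - (a + j) + 1) (ν - 1)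
    = Real.Gamma (((n - j : ℕ) : ℝ) + ν) / (((n - j).factorial : ℝ)) := by
  unfold rise
  have h1 : (a + n) - (a + j) + 1 + (ν - 1) = ((n - j : ℕ) : ℝ) + ν := by
    rw [Nat.cast_sub h]; ring
  have h2 : (a + n) - (a + j) + 1 = ((n - j : ℕ) : ℝ) + 1 := by
    rw [Nat.cast_sub h]; ring
  rw [h1, h2, Real.Gamma_nat_eq_factorial]


/-- semigroup property of the nabla fractional sum. -/
theorem nabla_nabla (a β₁ β₂ : ℝ) (hβ₁ : 0 < β₁) (hβ₂ : 0 < β₂) (f G : ℝ → ℝ)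
    (hG : ∀ m : ℕ, G (a + m) = nablaSum a β₂ f m) (n : ℕ) :
    nablaSum a β₁ G n = nablaSum a (β₁ + β₂) f n := by
  have hg1 : Real.Gamma β₁ ≠ 0 := (Real.Gamma_pos_of_pos hβ₁).ne'
  have hg2 : Real.Gamma β₂ ≠ 0 := (Real.Gamma_pos_of_pos hβ₂).ne'
  have hg12 : Real.Gamma (β₁ + β₂) ≠ 0 := (Real.Gamma_pos_of_pos (by linarith)).ne'
  set F : ℕ → ℕ → ℝ := fun j k =>
    (1 / Real.Gamma β₁) * (1 / Real.Gamma β₂) *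
      (Real.Gamma (((n - j : ℕ) : ℝ) + β₁) / ((n - j).factorial : ℝ)) *
      ((Real.Gamma (((j - k : ℕ) : ℝ) + β₂) / ((j - k).factorial : ℝ)) * f (a + k)) with hF
  have step1 : nablaSum a β₁ G n = ∑ j ∈ range (n + 1), ∑ k ∈ range (j + 1), F j k := by
    unfold nablaSum
    rw [Finset.mul_sum]
    refine Finset.sum_congr rfl fun j hj => ?_
    rw [mem_range] at hj
    rw [rise_eq a β₁ n j (by omega), hG j]
    unfold nablaSum
    rw [Finset.mul_sum, Finset.mul_sum, Finset.mul_sum]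
    refine Finset.sum_congr rfl fun k hk => ?_
    rw [mem_range] at hk
    rw [rise_eq a β₂ j k (by omega), hF]
    ring
  have step2 : ∑ j ∈ range (n + 1), ∑ k ∈ range (j + 1), F j k
      = ∑ k ∈ range (n + 1), ∑ j ∈ Ico k (n + 1), F j k := by
    simp only [Finset.range_eq_Ico]
    rw [← Finset.sum_Ico_Ico_comm 0 (n + 1) (fun k j => F j k)]
  have step3 : ∀ k ∈ range (n + 1), ∑ j ∈ Ico k (n + 1), F j k
      = (1 / Real.Gamma (β₁ + β₂)) *
        (rise ((a + n) - (a + k) + 1) (β₁ + β₂ - 1) * f (a + k)) := by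
    intro k hk
    rw [mem_range] at hk
    have hkn : k ≤ n := by omega
    rw [Finset.sum_Ico_eq_sum_range]
    have hM : n + 1 - k = (n - k) + 1 := by omega
    rw [hM]
    have inner : ∑ i ∈ range ((n - k) + 1), F (k + i) k
        = ((1 / Real.Gamma β₁) * (1 / Real.Gamma β₂) * f (a + k)) *
          ∑ i ∈ range ((n - k) + 1), Real.Gamma ((i : ℝ) + β₂) / (i.factorial : ℝ) *
            (Real.Gamma ((((n - k) - i : ℕ) : ℝ) + β₁) / (((n - k) - i).factorial : ℝ)) := by
      rw [Finset.mul_sum]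
      refine Finset.sum_congr rfl fun i hi => ?_
      rw [mem_range] at hi
      have e1 : n - (k + i) = (n - k) - i := by omega
      have e2 : (k + i) - k = i := by omega
      rw [hF]
      simp only [e1, e2]
      ring
    rw [inner, gamma_conv β₂ β₁ hβ₂ hβ₁ (n - k), rise_eq a (β₁ + β₂) n k hkn]
    have : ((n - k : ℕ) : ℝ) + β₂ + β₁ = ((n - k : ℕ) : ℝ) + (β₁ + β₂) := by ring
    rw [this, add_comm β₂ β₁]
    field_simp
  rw [step1, step2, Finset.sum_congr rfl step3]
  unfold nablaSum
  rw [Finset.mul_sum]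
end

section
/- Semigroup property of the delta fractional sum: let f be a real function on the grid {a, a+1, a+2, …} and α₁, α₂ > 0. Let F be the grid function F(a+m) := (Δ_a^{−α₂} f)(a+m+α₂) for m ∈ ℕ. Then for every n ∈ ℕ with t = a + n, (Δ_a^{−α₁} F)(t+α₁) = (Δ_a^{−(α₁+α₂)} f)(t+α₁+α₂). -/
open Finset

section Aux
open Polynomial

lemma gamma_asc (x : ℝ) (hx : 0 < x) (k : ℕ) :
    Real.Gamma (k + x) = (ascPochhammer ℝ k).eval x * Real.Gamma x := by
  induction k with
  | zero => simp
  | succ k ih =>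
    have h1 : (x + k) ≠ 0 := by positivity
    have h2 : ((k:ℝ) + 1) + x = (x + k) + 1 := by ring
    rw [Nat.cast_succ, h2, Real.Gamma_add_one h1, ascPochhammer_succ_eval,
      add_comm x (k:ℝ), ih]
    ring

lemma desc_smeval (p : ℤ[X]) (r : ℝ) : p.smeval r = (p.map (algebraMap ℤ ℝ)).eval r := by
  rw [← Polynomial.aeval_eq_smeval, aeval_def, eval_map]

lemma vdm (x y : ℝ) (N : ℕ) :
    ∑ i ∈ range (N+1), (N.choose i : ℝ) *
      ((ascPochhammer ℝ i).eval x * (ascPochhammer ℝ (N-i)).eval y)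
    = (ascPochhammer ℝ N).eval (x+y) := by
  have key : ∀ (k : ℕ) (z : ℝ), (descPochhammer ℝ k).eval (-z) =
      (-1)^k * (ascPochhammer ℝ k).eval z := by
    intro k z
    have h := ascPochhammer_eval_neg_eq_descPochhammer (R := ℝ) (-z) k
    rw [neg_neg] at h
    rw [h, ← mul_assoc, ← mul_pow]
    norm_num
  have h := Ring.descPochhammer_smeval_add (R := ℝ) (r := -x) (s := -y) N (Commute.all _ _)
  simp only [desc_smeval, descPochhammer_map] at h
  rw [show (-x + -y) = -(x+y) by ring, key] at h
  rw [Finset.Nat.sum_antidiagonal_eq_sum_range_succ_mk] at h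
  simp only [key] at h
  have h2 : (-1:ℝ)^N * (ascPochhammer ℝ N).eval (x+y) =
      ∑ i ∈ range (N+1), (-1:ℝ)^N * ((N.choose i : ℝ) *
        ((ascPochhammer ℝ i).eval x * (ascPochhammer ℝ (N-i)).eval y)) := by
    rw [h]
    refine Finset.sum_congr rfl fun i hi => ?_
    simp only [mem_range] at hi
    have : (-1:ℝ)^i * ((-1:ℝ)^(N-i)) = (-1:ℝ)^N := by
      rw [← pow_add]; congr 1; omega
    rw [← this]; ring
  rw [← Finset.mul_sum] at h2
  exact mul_left_cancel₀ (a := (-1:ℝ)^N) (pow_ne_zero _ (by norm_num)) h2.symm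

lemma conv (α₁ α₂ : ℝ) (hα₁ : 0 < α₁) (hα₂ : 0 < α₂) (N : ℕ) :
    ∑ i ∈ range (N+1),
      (Real.Gamma ((N-i : ℕ) + α₁) / (N-i).factorial) *
      (Real.Gamma ((i : ℕ) + α₂) / i.factorial)
    = Real.Gamma α₁ * Real.Gamma α₂ / Real.Gamma (α₁ + α₂) *
      (Real.Gamma (N + (α₁ + α₂)) / N.factorial) := by
  have hs : 0 < α₁ + α₂ := by linarith
  have hΓs : Real.Gamma (α₁ + α₂) ≠ 0 := (Real.Gamma_pos_of_pos hs).ne'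
  have step : ∀ i ∈ range (N+1),
      (Real.Gamma ((N-i : ℕ) + α₁) / (N-i).factorial) *
      (Real.Gamma ((i : ℕ) + α₂) / i.factorial)
      = Real.Gamma α₁ * Real.Gamma α₂ / N.factorial *
        ((N.choose i : ℝ) * ((ascPochhammer ℝ i).eval α₂ *
          (ascPochhammer ℝ (N-i)).eval α₁)) := by
    intro i hi
    simp only [mem_range] at hi
    have hiN : i ≤ N := by omega
    have hfac : ((N.choose i : ℝ)) * i.factorial * (N-i).factorial = N.factorial := by
      exact_mod_cast congrArg (Nat.cast : ℕ → ℝ) (Nat.choose_mul_factorial_mul_factorial hiN)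
    rw [gamma_asc _ hα₁, gamma_asc _ hα₂]
    have h1 : ((N-i).factorial : ℝ) ≠ 0 := by positivity
    have h2 : (i.factorial : ℝ) ≠ 0 := by positivity
    have h3 : (N.factorial : ℝ) ≠ 0 := by positivity
    field_simp
    linear_combination (-1 : ℝ) * (Polynomial.eval α₁ (ascPochhammer ℝ (N-i)) *
      Polynomial.eval α₂ (ascPochhammer ℝ i)) * hfac
  rw [Finset.sum_congr rfl step, ← Finset.mul_sum, vdm α₂ α₁ N,
    gamma_asc _ hs N, add_comm α₂ α₁]
  field_simp

lemma fall_eq (a ν : ℝ) (p q : ℕ) (h : q ≤ p) :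
    fall ((a + p) + ν - (a + q) - 1) (ν - 1)
      = Real.Gamma ((p - q : ℕ) + ν) / (p - q).factorial := by
  have e1 : (a + p) + ν - (a + q) - 1 + 1 = ((p - q : ℕ) : ℝ) + ν := by
    push_cast [h]; ring
  have e2 : (a + p) + ν - (a + q) - 1 + 1 - (ν - 1) = ((p - q : ℕ) : ℝ) + 1 := by
    push_cast [h]; ring
  have e2' : ((p - q : ℕ) : ℝ) + ν - (ν - 1) = ((p - q : ℕ) : ℝ) + 1 := by ring
  rw [fall, e1, e2', Real.Gamma_nat_eq_factorial]

end Aux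

/-- semigroup property of the delta fractional sum. -/
theorem delta_delta (a α₁ α₂ : ℝ) (hα₁ : 0 < α₁) (hα₂ : 0 < α₂) (f F : ℝ → ℝ)
    (hF : ∀ m : ℕ, F (a + m) = deltaSum a α₂ f m) (n : ℕ) :
    deltaSum a α₁ F n = deltaSum a (α₁ + α₂) f n := by
  have hs : 0 < α₁ + α₂ := by linarith
  have hΓ1 : Real.Gamma α₁ ≠ 0 := (Real.Gamma_pos_of_pos hα₁).ne'
  have hΓ2 : Real.Gamma α₂ ≠ 0 := (Real.Gamma_pos_of_pos hα₂).ne'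
  have hΓs : Real.Gamma (α₁ + α₂) ≠ 0 := (Real.Gamma_pos_of_pos hs).ne'
  calc deltaSum a α₁ F n
      = ∑ m ∈ range (n+1), ∑ j ∈ range (m+1),
          (1 / (Real.Gamma α₁ * Real.Gamma α₂)) *
          ((Real.Gamma ((n-m : ℕ) + α₁) / (n-m).factorial) *
           (Real.Gamma ((m-j : ℕ) + α₂) / (m-j).factorial)) * f (a + j) := by
        rw [deltaSum, Finset.mul_sum]
        refine Finset.sum_congr rfl fun m hm => ?_
        simp only [mem_range] at hm
        rw [hF m, deltaSum, fall_eq a α₁ n m (by omega), Finset.mul_sum, Finset.mul_sum, Finset.mul_sum]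
        refine Finset.sum_congr rfl fun j hj => ?_
        simp only [mem_range] at hj
        rw [fall_eq a α₂ m j (by omega)]
        field_simp
    _ = ∑ j ∈ range (n+1), ∑ m ∈ Finset.Ico j (n+1),
          (1 / (Real.Gamma α₁ * Real.Gamma α₂)) *
          ((Real.Gamma ((n-m : ℕ) + α₁) / (n-m).factorial) *
           (Real.Gamma ((m-j : ℕ) + α₂) / (m-j).factorial)) * f (a + j) := by
        exact Finset.sum_comm' (s := range (n+1)) (t := fun m => range (m+1))
          (t' := range (n+1)) (s' := fun j => Finset.Ico j (n+1))
          (fun m j => by simp only [mem_range, Finset.mem_Ico]; omega)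
    _ = deltaSum a (α₁ + α₂) f n := by
        rw [deltaSum, Finset.mul_sum]
        refine Finset.sum_congr rfl fun j hj => ?_
        simp only [mem_range] at hj
        rw [fall_eq a (α₁ + α₂) n j (by omega)]
        rw [Finset.sum_Ico_eq_sum_range]
        have hnj : n + 1 - j = (n - j) + 1 := by omega
        rw [hnj]
        have : ∀ i ∈ range ((n - j) + 1),
            (1 / (Real.Gamma α₁ * Real.Gamma α₂)) *
            ((Real.Gamma ((n-(j+i) : ℕ) + α₁) / (n-(j+i)).factorial) *
             (Real.Gamma (((j+i)-j : ℕ) + α₂) / ((j+i)-j).factorial)) * f (a + j)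
            = ((1 / (Real.Gamma α₁ * Real.Gamma α₂)) * f (a + j)) *
              ((Real.Gamma (((n-j)-i : ℕ) + α₁) / ((n-j)-i).factorial) *
               (Real.Gamma ((i : ℕ) + α₂) / i.factorial)) := by
          intro i hi
          simp only [mem_range] at hi
          have e1 : n - (j + i) = (n - j) - i := by omega
          have e2 : (j + i) - j = i := by omega
          rw [e1, e2]; ring
        rw [Finset.sum_congr rfl this, ← Finset.mul_sum, conv α₁ α₂ hα₁ hα₂ (n - j)]
        field_simp
end

section
/- Mixed composition (delta after nabla): let f be a real function on the grid {a, a+1, a+2, …} and α, β > 0. Let G be the grid function G(a+m) := (∇_a^{−β} f)(a+m) for m ∈ ℕ. Then for every n ∈ ℕ with t = a + n, (Δ_a^{−α} G)(t+α) = (∇_a^{−(α+β)} f)(t). -/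
open Finset

noncomputable def ascR (x : ℝ) : ℕ → ℝ
  | 0 => 1
  | k+1 => ascR x k * (x + k)

lemma gamma_ascR {x : ℝ} (hx : 0 < x) (k : ℕ) :
    Real.Gamma (x + k) = Real.Gamma x * ascR x k := by
  induction k with
  | zero => simp [ascR]
  | succ k ih =>
      have h1 : (x + (↑(k+1)):ℝ) = (x + k) + 1 := by push_cast; ring
      rw [h1, Real.Gamma_add_one (by positivity), ih, ascR]
      ring

lemma vandermondeR (x y : ℝ) (m : ℕ) :
    ∑ k ∈ range (m+1), (m.choose k : ℝ) * ascR x (m-k) * ascR y k = ascR (x+y) m := by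
  induction m with
  | zero => simp [ascR]
  | succ m ih =>
    have hA : ∀ k ∈ range (m+1),
        (m.choose k : ℝ) * ascR x (m+1-(k+1)) * ascR y (k+1)
          + (m.choose k : ℝ) * ascR x (m+1-k) * ascR y k
        = ((m.choose k : ℝ) * ascR x (m-k) * ascR y k) * (x + y + m) := by
      intro k hk
      rw [mem_range, Nat.lt_succ_iff] at hk
      have h1 : m + 1 - (k+1) = m - k := by omega
      have h2 : m + 1 - k = (m - k) + 1 := by omega
      have h3 : ((m - k : ℕ) : ℝ) = (m : ℝ) - k := by
        rw [Nat.cast_sub hk]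
      rw [h1, h2]
      show (m.choose k : ℝ) * ascR x (m-k) * (ascR y k * (y + k))
          + (m.choose k : ℝ) * (ascR x (m-k) * (x + ↑(m-k))) * ascR y k = _
      rw [h3]; ring
    calc ∑ k ∈ range (m+1+1), ((m+1).choose k : ℝ) * ascR x (m+1-k) * ascR y k
        = ∑ k ∈ range (m+1), ((m+1).choose (k+1) : ℝ) * ascR x (m+1-(k+1)) * ascR y (k+1)
          + ((m+1).choose 0 : ℝ) * ascR x (m+1-0) * ascR y 0 :=
          Finset.sum_range_succ' _ _
      _ = ∑ k ∈ range (m+1), (m.choose k : ℝ) * ascR x (m+1-(k+1)) * ascR y (k+1)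
          + (∑ k ∈ range (m+1), (m.choose (k+1) : ℝ) * ascR x (m+1-(k+1)) * ascR y (k+1)
            + (m.choose 0 : ℝ) * ascR x (m+1-0) * ascR y 0) := by
          simp only [Nat.choose_succ_succ, Nat.cast_add, add_mul, Nat.choose_zero_right,
            Nat.cast_one, Finset.sum_add_distrib]
          ring
      _ = ∑ k ∈ range (m+1), (m.choose k : ℝ) * ascR x (m+1-(k+1)) * ascR y (k+1)
          + ∑ k ∈ range (m+1+1), (m.choose k : ℝ) * ascR x (m+1-k) * ascR y k := by
          rw [Finset.sum_range_succ' (fun k => (m.choose k : ℝ) * ascR x (m+1-k) * ascR y k) (m+1)]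
      _ = ∑ k ∈ range (m+1), (m.choose k : ℝ) * ascR x (m+1-(k+1)) * ascR y (k+1)
          + ∑ k ∈ range (m+1), (m.choose k : ℝ) * ascR x (m+1-k) * ascR y k := by
          rw [Finset.sum_range_succ (fun k => (m.choose k : ℝ) * ascR x (m+1-k) * ascR y k) (m+1),
            Nat.choose_succ_self]
          push_cast
          ring
      _ = ∑ k ∈ range (m+1), ((m.choose k : ℝ) * ascR x (m-k) * ascR y k) * (x + y + m) := by
          rw [← Finset.sum_add_distrib]
          exact Finset.sum_congr rfl hA
      _ = ascR (x+y) (m+1) := by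
          rw [← Finset.sum_mul, ih]
          show _ = ascR (x+y) m * ((x+y) + m)
          ring

lemma keyR (α β : ℝ) (m : ℕ) :
    ∑ k ∈ range (m+1), ascR α (m-k) / (m-k).factorial * (ascR β k / k.factorial)
      = ascR (α+β) m / m.factorial := by
  have hm : ((m.factorial : ℕ) : ℝ) ≠ 0 := Nat.cast_ne_zero.mpr m.factorial_ne_zero
  rw [eq_div_iff hm, ← vandermondeR, Finset.sum_mul]
  refine Finset.sum_congr rfl fun k hk => ?_
  rw [mem_range, Nat.lt_succ_iff] at hk
  have hfac : (m.factorial : ℝ) = (m.choose k : ℝ) * k.factorial * (m-k).factorial := by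
    rw [← Nat.choose_mul_factorial_mul_factorial hk]; push_cast; ring
  have h1 : ((m-k).factorial : ℝ) ≠ 0 := Nat.cast_ne_zero.mpr (m-k).factorial_ne_zero
  have h2 : ((k.factorial : ℕ) : ℝ) ≠ 0 := Nat.cast_ne_zero.mpr k.factorial_ne_zero
  rw [hfac]
  field_simp

/-- mixed composition (delta after nabla). -/
theorem delta_nabla (a α β : ℝ) (hα : 0 < α) (hβ : 0 < β) (f G : ℝ → ℝ)
    (hG : ∀ m : ℕ, G (a + m) = nablaSum a β f m) (n : ℕ) :
    deltaSum a α G n = nablaSum a (α + β) f n := by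
  have hΓα : Real.Gamma α ≠ 0 := (Real.Gamma_pos_of_pos hα).ne'
  have hΓβ : Real.Gamma β ≠ 0 := (Real.Gamma_pos_of_pos hβ).ne'
  have hΓαβ : Real.Gamma (α+β) ≠ 0 := (Real.Gamma_pos_of_pos (by linarith)).ne'
  have hR : nablaSum a (α+β) f n
      = ∑ i ∈ range (n+1), ascR (α+β) (n-i) / (n-i).factorial * f (a+i) := by
    rw [nablaSum, Finset.mul_sum]
    refine Finset.sum_congr rfl fun i hi => ?_
    rw [mem_range, Nat.lt_succ_iff] at hi
    rw [rise]
    have e1 : (a+(n:ℝ)) - (a+(i:ℝ)) + 1 + (α+β-1) = (α+β) + ((n-i:ℕ):ℝ) := by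
      rw [Nat.cast_sub hi]; ring
    have e2 : (a+(n:ℝ)) - (a+(i:ℝ)) + 1 = ((n-i:ℕ):ℝ) + 1 := by
      rw [Nat.cast_sub hi]; ring
    rw [e1, e2, gamma_ascR (by linarith : (0:ℝ) < α+β), Real.Gamma_nat_eq_factorial]
    field_simp
  have hL : deltaSum a α G n = ∑ j ∈ range (n+1), ∑ i ∈ range (j+1),
      ascR α (n-j) / (n-j).factorial * (ascR β (j-i) / (j-i).factorial) * f (a+i) := by
    rw [deltaSum, Finset.mul_sum]
    refine Finset.sum_congr rfl fun j hj => ?_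
    rw [mem_range, Nat.lt_succ_iff] at hj
    rw [hG j, nablaSum, fall]
    have e1 : (a+(n:ℝ)) + α - (a+(j:ℝ)) - 1 + 1 = α + ((n-j:ℕ):ℝ) := by
      rw [Nat.cast_sub hj]; ring
    have e2 : α + ((n-j:ℕ):ℝ) - (α-1) = ((n-j:ℕ):ℝ) + 1 := by ring
    rw [e1, e2, gamma_ascR hα, Real.Gamma_nat_eq_factorial]
    simp only [Finset.mul_sum]
    refine Finset.sum_congr rfl fun i hi => ?_
    rw [mem_range, Nat.lt_succ_iff] at hi
    rw [rise]
    have e3 : (a+(j:ℝ)) - (a+(i:ℝ)) + 1 + (β-1) = β + ((j-i:ℕ):ℝ) := by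
      rw [Nat.cast_sub hi]; ring
    have e4 : (a+(j:ℝ)) - (a+(i:ℝ)) + 1 = ((j-i:ℕ):ℝ) + 1 := by
      rw [Nat.cast_sub hi]; ring
    rw [e3, e4, gamma_ascR hβ, Real.Gamma_nat_eq_factorial]
    field_simp
  rw [hL, hR]
  set F : ℕ → ℕ → ℝ := fun i j =>
    ascR α (n-j) / (n-j).factorial * (ascR β (j-i) / (j-i).factorial) * f (a+i) with hF
  calc ∑ j ∈ range (n+1), ∑ i ∈ range (j+1), F i j
      = ∑ i ∈ range (n+1), ∑ j ∈ Ico i (n+1), F i j := by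
        simp only [← Nat.Ico_zero_eq_range]
        exact (Finset.sum_Ico_Ico_comm 0 (n+1) F).symm
    _ = ∑ i ∈ range (n+1), ascR (α+β) (n-i) / (n-i).factorial * f (a+i) := by
        refine Finset.sum_congr rfl fun i hi => ?_
        rw [mem_range, Nat.lt_succ_iff] at hi
        rw [Finset.sum_Ico_eq_sum_range]
        have hni : n + 1 - i = (n-i) + 1 := by omega
        rw [hni]
        have : ∀ k ∈ range ((n-i)+1),
            F i (i+k) = ascR α ((n-i)-k) / ((n-i)-k).factorial
              * (ascR β k / k.factorial) * f (a+i) := by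
          intro k hk
          rw [hF]
          have h1 : n - (i+k) = (n-i) - k := by omega
          have h2 : (i+k) - i = k := by omega
          simp only [h1, h2]
        rw [Finset.sum_congr rfl this, ← Finset.sum_mul, keyR]
end

section
/- Mixed composition (nabla after delta): let f be a real function on the grid {a, a+1, a+2, …} and α, β > 0. Let F be the grid function F(a+m) := (Δ_a^{−α} f)(a+m+α) for m ∈ ℕ. Then for every n ∈ ℕ with t = a + n, (∇_a^{−β} F)(t) = (∇_a^{−(α+β)} f)(t). -/
open Finset

/-- rising factorial as a product -/
noncomputable def asc (x : ℝ) : ℕ → ℝ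
  | 0 => 1
  | k + 1 => asc x k * (x + k)

lemma Gamma_add_nat (x : ℝ) (hx : 0 < x) (k : ℕ) :
    Real.Gamma (x + k) = Real.Gamma x * asc x k := by
  induction k with
  | zero => simp [asc]
  | succ k ih =>
      have hxk : x + (k : ℝ) ≠ 0 := by positivity
      have h1 : Real.Gamma (x + ((k : ℕ) + 1 : ℕ)) = (x + k) * Real.Gamma (x + k) := by
        push_cast
        rw [show x + ((k : ℝ) + 1) = x + k + 1 by ring, Real.Gamma_add_one hxk]
      rw [h1, ih, asc]; ring

lemma vandermonde (α β : ℝ) (N : ℕ) :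
    ∑ k ∈ range (N + 1), (N.choose k : ℝ) * asc α k * asc β (N - k) = asc (α + β) N := by
  induction N with
  | zero => simp [asc]
  | succ N ih =>
      set x : ℕ → ℝ := fun k => asc α k * asc β (N + 1 - k) with hx
      have key : ∑ k ∈ range (N + 2), ((N + 1).choose k : ℝ) * x k
          = ∑ k ∈ range (N + 2), (N.choose k : ℝ) * x k
            + ∑ k ∈ range (N + 1), (N.choose k : ℝ) * x (k + 1) := by
        rw [Finset.sum_range_succ' (fun k => ((N + 1).choose k : ℝ) * x k) (N + 1),
          Finset.sum_range_succ' (fun k => ((N).choose k : ℝ) * x k) (N + 1)]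
        simp only [Nat.choose_succ_succ, Nat.cast_add, Nat.choose_zero_right, Nat.cast_one,
          add_mul, Finset.sum_add_distrib]
        ring
      have e1 : ∀ k ∈ range (N + 2), ((N + 1).choose k : ℝ) * x k
          = ((N + 1).choose k : ℝ) * asc α k * asc β (N + 1 - k) := by
        intro k _; rw [hx]; ring
      have e2 : ∑ k ∈ range (N + 2), (N.choose k : ℝ) * x k
          = ∑ k ∈ range (N + 1), (N.choose k : ℝ) * asc α k * asc β (N - k) * (β + (N - k : ℕ)) := by
        rw [Finset.sum_range_succ, Nat.choose_succ_self]
        simp only [Nat.cast_zero, zero_mul, add_zero]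
        refine Finset.sum_congr rfl fun k hk => ?_
        have hk' : k ≤ N := Nat.lt_succ_iff.mp (Finset.mem_range.mp hk)
        rw [hx]
        simp only []
        rw [show N + 1 - k = (N - k) + 1 by omega, asc]
        ring
      have e3 : ∑ k ∈ range (N + 1), (N.choose k : ℝ) * x (k + 1)
          = ∑ k ∈ range (N + 1), (N.choose k : ℝ) * asc α k * asc β (N - k) * (α + k) := by
        refine Finset.sum_congr rfl fun k hk => ?_
        rw [hx]
        simp only []
        rw [show N + 1 - (k + 1) = N - k by omega, asc]
        push_cast
        ring
      have e4 : ∑ k ∈ range (N + 1 + 1), ((N + 1).choose k : ℝ) * asc α k * asc β (N + 1 - k)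
          = ∑ k ∈ range (N + 1), (N.choose k : ℝ) * asc α k * asc β (N - k) * ((α + β) + N) := by
        rw [← Finset.sum_congr rfl e1, key, e2, e3, ← Finset.sum_add_distrib]
        refine Finset.sum_congr rfl fun k hk => ?_
        have hk' : k ≤ N := Nat.lt_succ_iff.mp (Finset.mem_range.mp hk)
        rw [Nat.cast_sub hk']
        ring
      rw [e4, ← Finset.sum_mul, ih, asc]

lemma coeff (α β : ℝ) (hα : 0 < α) (hβ : 0 < β) (N : ℕ) :
    ∑ k ∈ range (N + 1),
      Real.Gamma (β + ((N - k : ℕ) : ℝ)) / Real.Gamma (((N - k : ℕ) : ℝ) + 1) *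
        (Real.Gamma (α + (k : ℝ)) / Real.Gamma ((k : ℝ) + 1))
    = Real.Gamma α * Real.Gamma β / Real.Gamma (α + β) *
        (Real.Gamma ((α + β) + (N : ℝ)) / Real.Gamma ((N : ℝ) + 1)) := by
  have hαβ : (0 : ℝ) < α + β := by linarith
  have hΓαβ : Real.Gamma (α + β) ≠ 0 := (Real.Gamma_pos_of_pos hαβ).ne'
  rw [Gamma_add_nat (α + β) hαβ N, ← vandermonde α β N, Real.Gamma_nat_eq_factorial,
    Finset.mul_sum, Finset.sum_div, Finset.mul_sum]
  refine Finset.sum_congr rfl fun k hk => ?_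
  have hk' : k ≤ N := Nat.lt_succ_iff.mp (Finset.mem_range.mp hk)
  rw [Gamma_add_nat β hβ (N - k), Gamma_add_nat α hα k, Real.Gamma_nat_eq_factorial,
    Real.Gamma_nat_eq_factorial, Nat.cast_choose ℝ hk']
  have h1 : ((N - k).factorial : ℝ) ≠ 0 := Nat.cast_ne_zero.mpr (Nat.factorial_ne_zero _)
  have h2 : (k.factorial : ℝ) ≠ 0 := Nat.cast_ne_zero.mpr (Nat.factorial_ne_zero _)
  have h3 : (N.factorial : ℝ) ≠ 0 := Nat.cast_ne_zero.mpr (Nat.factorial_ne_zero _)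
  field_simp

open Finset

lemma inner_eq (a α β : ℝ) (hα : 0 < α) (hβ : 0 < β) (f : ℝ → ℝ) (n j : ℕ) (hjn : j ≤ n) :
    ∑ m ∈ Finset.Ico j (n + 1), (1 / Real.Gamma β) * ((1 / Real.Gamma α) *
        (rise ((a + (n : ℝ)) - (a + (m : ℝ)) + 1) (β - 1) *
          (fall ((a + (m : ℝ)) + α - (a + (j : ℝ)) - 1) (α - 1) * f (a + (j : ℝ)))))
    = (1 / Real.Gamma (α + β)) *
        (rise ((a + (n : ℝ)) - (a + (j : ℝ)) + 1) (α + β - 1) * f (a + (j : ℝ))) := by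
  have hΓα : Real.Gamma α ≠ 0 := (Real.Gamma_pos_of_pos hα).ne'
  have hΓβ : Real.Gamma β ≠ 0 := (Real.Gamma_pos_of_pos hβ).ne'
  have hαβ : (0 : ℝ) < α + β := by linarith
  have hΓαβ : Real.Gamma (α + β) ≠ 0 := (Real.Gamma_pos_of_pos hαβ).ne'
  rw [Finset.sum_Ico_eq_sum_range]
  set N : ℕ := n - j with hN
  have hnj : n + 1 - j = N + 1 := by omega
  rw [hnj]
  have step : ∀ k ∈ range (N + 1),
      (1 / Real.Gamma β) * ((1 / Real.Gamma α) *
        (rise ((a + (n : ℝ)) - (a + ((j + k : ℕ) : ℝ)) + 1) (β - 1) *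
          (fall ((a + ((j + k : ℕ) : ℝ)) + α - (a + (j : ℝ)) - 1) (α - 1) * f (a + (j : ℝ)))))
      = (1 / Real.Gamma β) * (1 / Real.Gamma α) *
          (Real.Gamma (β + ((N - k : ℕ) : ℝ)) / Real.Gamma (((N - k : ℕ) : ℝ) + 1) *
            (Real.Gamma (α + (k : ℝ)) / Real.Gamma ((k : ℝ) + 1))) * f (a + (j : ℝ)) := by
    intro k hk
    have hkN : k ≤ N := Nat.lt_succ_iff.mp (Finset.mem_range.mp hk)
    have c1 : ((N - k : ℕ) : ℝ) = (n : ℝ) - j - k := by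
      rw [Nat.cast_sub hkN, hN, Nat.cast_sub hjn]
    simp only [rise, fall]
    rw [c1]
    push_cast
    have e1 : a + (n:ℝ) - (a + ((j:ℝ) + k)) + 1 + (β - 1) = β + ((n:ℝ) - j - k) := by ring
    have e2 : a + (n:ℝ) - (a + ((j:ℝ) + k)) + 1 = ((n:ℝ) - j - k) + 1 := by ring
    have e4 : a + ((j:ℝ) + k) + α - (a + j) - 1 + 1 - (α - 1) = (k:ℝ) + 1 := by ring
    have e3 : a + ((j:ℝ) + k) + α - (a + j) - 1 + 1 = α + k := by ring
    rw [e1, e2, e4, e3]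
    ring
  rw [Finset.sum_congr rfl step, ← Finset.sum_mul, ← Finset.mul_sum, coeff α β hα hβ N]
  have r1 : a + (n : ℝ) - (a + j) + 1 + (α + β - 1) = (α + β) + (N : ℝ) := by
    rw [hN, Nat.cast_sub hjn]; ring
  have r2 : a + (n : ℝ) - (a + j) + 1 = (N : ℝ) + 1 := by
    rw [hN, Nat.cast_sub hjn]; ring
  rw [rise, r1, r2]
  field_simp

/-- mixed composition (nabla after delta). -/
theorem nabla_delta (a α β : ℝ) (hα : 0 < α) (hβ : 0 < β) (f F : ℝ → ℝ)
    (hF : ∀ m : ℕ, F (a + m) = deltaSum a α f m) (n : ℕ) :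
    nablaSum a β F n = nablaSum a (α + β) f n := by
  calc nablaSum a β F n
      = ∑ m ∈ range (n + 1), ∑ j ∈ range (m + 1),
          (1 / Real.Gamma β) * ((1 / Real.Gamma α) *
            (rise ((a + (n : ℝ)) - (a + (m : ℝ)) + 1) (β - 1) *
              (fall ((a + (m : ℝ)) + α - (a + (j : ℝ)) - 1) (α - 1) * f (a + (j : ℝ))))) := by
        rw [nablaSum, Finset.mul_sum]
        refine Finset.sum_congr rfl fun m _ => ?_
        rw [hF m, deltaSum, Finset.mul_sum, Finset.mul_sum, Finset.mul_sum]
        refine Finset.sum_congr rfl fun j _ => ?_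
        ring
    _ = ∑ j ∈ range (n + 1), ∑ m ∈ Finset.Ico j (n + 1),
          (1 / Real.Gamma β) * ((1 / Real.Gamma α) *
            (rise ((a + (n : ℝ)) - (a + (m : ℝ)) + 1) (β - 1) *
              (fall ((a + (m : ℝ)) + α - (a + (j : ℝ)) - 1) (α - 1) * f (a + (j : ℝ))))) := by
        have h := Finset.sum_Ico_Ico_comm (M := ℝ) 0 (n + 1) (fun i m =>
          (1 / Real.Gamma β) * ((1 / Real.Gamma α) *
            (rise ((a + (n : ℝ)) - (a + (m : ℝ)) + 1) (β - 1) *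
              (fall ((a + (m : ℝ)) + α - (a + (i : ℝ)) - 1) (α - 1) * f (a + (i : ℝ))))))
        simp only [Finset.range_eq_Ico]
        exact h.symm
    _ = ∑ j ∈ range (n + 1), (1 / Real.Gamma (α + β)) *
          (rise ((a + (n : ℝ)) - (a + (j : ℝ)) + 1) (α + β - 1) * f (a + (j : ℝ))) := by
        refine Finset.sum_congr rfl fun j hj => ?_
        exact inner_eq a α β hα hβ f n j (Nat.lt_succ_iff.mp (Finset.mem_range.mp hj))
    _ = nablaSum a (α + β) f n := by
        rw [nablaSum, Finset.mul_sum]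
end

section
/- Leibniz formula for the delta fractional sum: let f, g be real functions on the grid {a, a+1, a+2, …}, let 0 < α < 1, and n ∈ ℕ with t = a + n. Then (Δ_a^{−α}(f·g))(t+α) = Σ_{k=0}^{n} binom(−α,k)·(∇^k g)(t)·[(1/Γ(α+k)) Σ_{j=0}^{n−k} (t+α−(a+j)−1)^(α+k−1) f(a+j)], where f·g is the pointwise product. -/
open Finset

lemma shift_sum (t : ℝ) : ∀ (m : ℕ) (g : ℝ → ℝ),
    g (t - m) = ∑ k ∈ Finset.range (m+1), (-1 : ℝ)^k * (m.choose k) * (bdiff^[k] g) t := by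
  intro m
  induction m with
  | zero => intro g; simp
  | succ m ih =>
    intro g
    have h1 : g (t - (m+1 : ℕ)) = g (t - m) - (bdiff g) (t - m) := by
      simp only [bdiff]
      push_cast
      ring_nf
    rw [h1, ih g, ih (bdiff g)]
    have h2 : ∀ k : ℕ, (bdiff^[k] (bdiff g)) t = (bdiff^[k+1] g) t := by
      intro k; rw [Function.iterate_succ_apply]
    rw [Finset.sum_range_succ' (fun k => (-1 : ℝ)^k * ((m+1).choose k) * (bdiff^[k] g) t)]
    have h3 : ∀ k ∈ Finset.range (m+1),
        (-1 : ℝ)^(k+1) * (((m+1).choose (k+1) : ℕ)) * (bdiff^[k+1] g) t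
        = (-1 : ℝ)^(k+1) * ((m.choose k : ℕ)) * (bdiff^[k+1] g) t
          + (-1 : ℝ)^(k+1) * ((m.choose (k+1) : ℕ)) * (bdiff^[k+1] g) t := by
      intro k _
      rw [Nat.choose_succ_succ]
      push_cast
      ring
    rw [Finset.sum_congr rfl h3, Finset.sum_add_distrib]
    have h4 : ∑ k ∈ Finset.range (m+1), (-1 : ℝ)^(k+1) * ((m.choose k : ℕ)) * (bdiff^[k+1] g) t
        = - ∑ k ∈ Finset.range (m+1), (-1 : ℝ)^k * ((m.choose k : ℕ)) * (bdiff^[k] (bdiff g)) t := by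
      rw [← Finset.sum_neg_distrib]
      refine Finset.sum_congr rfl fun k _ => ?_
      rw [h2]; ring
    have h5 : ∑ k ∈ Finset.range (m+1), (-1 : ℝ)^(k+1) * ((m.choose (k+1) : ℕ)) * (bdiff^[k+1] g) t
          + (-1 : ℝ)^0 * ((m.choose 0 : ℕ)) * (bdiff^[0] g) t
        = ∑ k ∈ Finset.range (m+1), (-1 : ℝ)^k * ((m.choose k : ℕ)) * (bdiff^[k] g) t := by
      rw [← Finset.sum_range_succ' (fun k => (-1 : ℝ)^k * ((m.choose k : ℕ)) * (bdiff^[k] g) t) (m+1)]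
      rw [Finset.sum_range_succ]
      simp [Nat.choose_succ_self]
    simp only [Nat.choose_zero_right, Nat.cast_one, pow_zero, Function.iterate_zero, id]
      at h5 ⊢
    linarith [h4, h5]

lemma gamma_refl (α : ℝ) (hα₀ : 0 < α) (hα₁ : α < 1) : ∀ k : ℕ,
    Real.Gamma (α + k) * Real.Gamma (1 - α - k) = (-1 : ℝ)^k * Real.Gamma α * Real.Gamma (1 - α):= by
  intro k
  induction k with
  | zero => simp
  | succ k ih =>
    have hk2 : α + (k : ℝ) ≠ 0 := by positivity
    have hk4 : (-α - (k : ℝ)) ≠ 0 := by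
      have : (0:ℝ) ≤ (k:ℝ) := Nat.cast_nonneg k
      intro h; have : α = -(k : ℝ) := by linarith
      linarith [hα₀, this]
    have e1 : Real.Gamma (α + (k+1 : ℕ)) = (α + k) * Real.Gamma (α + k) := by
      push_cast
      rw [show α + ((k:ℝ) + 1) = (α + k) + 1 by ring, Real.Gamma_add_one hk2]
    have e2 : Real.Gamma (1 - α - k) = (-α - k) * Real.Gamma (1 - α - (k+1 : ℕ)) := by
      rw [show (1 - α - (k:ℝ)) = (-α - k) + 1 by ring, Real.Gamma_add_one hk4]
      push_cast
      ring_nf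
    have e3 : Real.Gamma (1 - α - (k+1:ℕ)) = Real.Gamma (1 - α - k) / (-α - k) := by
      rw [e2]; field_simp
    rw [e1, e3]
    field_simp
    push_cast
    linear_combination (α + (k:ℝ)) * ih

lemma gamma_ne_zero' (α : ℝ) (hα₀ : 0 < α) (hα₁ : α < 1) (k : ℕ) :
    Real.Gamma (1 - α - k) ≠ 0 := by
  apply Real.Gamma_ne_zero
  intro m h
  have h1 : (k:ℝ) < m + 1 := by linarith
  have h2 : (m:ℝ) < k := by linarith
  have : (k:ℕ) < m + 1 := by exact_mod_cast h1
  have : (m:ℕ) < k := by exact_mod_cast h2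
  omega

lemma binom_div (α : ℝ) (hα₀ : 0 < α) (hα₁ : α < 1) (k : ℕ) :
    binomR (-α) k * (1 / Real.Gamma (α + k)) = (-1 : ℝ)^k / (Real.Gamma α * k.factorial) := by
  have e0 : binomR (-α) k = Real.Gamma (1 - α) / ((k.factorial : ℝ) * Real.Gamma (1 - α - k)) := by
    unfold binomR
    rw [show (-α + 1 : ℝ) = 1 - α by ring, show (-α - k + 1 : ℝ) = 1 - α - k by ring]
    rw [show ((k:ℝ) + 1) = ((k:ℕ) : ℝ) + 1 by norm_num, Real.Gamma_nat_eq_factorial]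
  have h1 := gamma_refl α hα₀ hα₁ k
  have h2 := gamma_ne_zero' α hα₀ hα₁ k
  have h3 : Real.Gamma (α + k) ≠ 0 := by
    apply ne_of_gt; apply Real.Gamma_pos_of_pos; positivity
  have h4 : Real.Gamma (1 - α) ≠ 0 := by
    apply ne_of_gt; apply Real.Gamma_pos_of_pos; linarith
  have h5 : (k.factorial : ℝ) ≠ 0 := by exact_mod_cast k.factorial_ne_zero
  have h6 : Real.Gamma α ≠ 0 := ne_of_gt (Real.Gamma_pos_of_pos hα₀)
  have hs : ((-1:ℝ)^k) * ((-1:ℝ)^k) = 1 := by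
    rw [← pow_add, ← two_mul, pow_mul]
    norm_num
  rw [e0]
  field_simp
  linear_combination (-(-1:ℝ)^k) * h1
    - (Real.Gamma α * Real.Gamma (1 - α)) * hs

lemma fall_zero {m k : ℕ} (h : m < k) (α : ℝ) :
    fall ((m:ℝ) + α - 1) (α + k - 1) = 0 := by
  unfold fall
  have hc : ((k - m - 1 : ℕ) : ℝ) = (k:ℝ) - (m:ℝ) - 1 := by
    rw [show k - m - 1 = k - (m+1) from by omega, Nat.cast_sub h]
    push_cast; ring
  have : ((m:ℝ) + α - 1 + 1 - (α + k - 1)) = -((k - m - 1 : ℕ) : ℝ) := by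
    rw [hc]; ring
  rw [this, Real.Gamma_neg_nat_eq_zero, div_zero]

lemma fall_fact {m k : ℕ} (h : k ≤ m) (α : ℝ) :
    fall ((m:ℝ) + α - 1) (α + k - 1) = Real.Gamma ((m:ℝ) + α) / ((m - k).factorial : ℝ) := by
  unfold fall
  have e2 : ((m:ℝ) + α - 1 + 1 - (α + k - 1)) = ((m - k : ℕ) : ℝ) + 1 := by
    push_cast [Nat.cast_sub h]; ring
  rw [e2, Real.Gamma_nat_eq_factorial,
    show ((m:ℝ) + α - 1 + 1) = (m:ℝ) + α by ring]

lemma binom_eq (α : ℝ) (hα₀ : 0 < α) (hα₁ : α < 1) (k : ℕ) :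
    binomR (-α) k = (-1 : ℝ)^k * Real.Gamma (α + k) / (Real.Gamma α * k.factorial) := by
  have hbd := binom_div α hα₀ hα₁ k
  have h3 : Real.Gamma (α + k) ≠ 0 := by
    apply ne_of_gt; apply Real.Gamma_pos_of_pos; positivity
  field_simp at hbd ⊢
  linear_combination hbd

/-- Leibniz formula for the delta fractional sum. -/
theorem delta_leibniz (a α : ℝ) (hα₀ : 0 < α) (hα₁ : α < 1) (f g : ℝ → ℝ) (n : ℕ) :
    deltaSum a α (f * g) n
      = ∑ k ∈ Finset.range (n + 1),
          binomR (-α) (k : ℝ) * (bdiff^[k] g) (a + n) *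
            ((1 / Real.Gamma (α + k)) * ∑ j ∈ Finset.range (n - k + 1),
              fall ((a + n) + α - (a + j) - 1) (α + k - 1) * f (a + j)) := by
  have hΓα : Real.Gamma α ≠ 0 := ne_of_gt (Real.Gamma_pos_of_pos hα₀)
  -- extend inner sums
  have hext : ∀ k, k ≤ n →
      (∑ j ∈ Finset.range (n - k + 1), fall ((a + n) + α - (a + j) - 1) (α + k - 1) * f (a + j))
      = ∑ j ∈ Finset.range (n + 1), fall (((n - j : ℕ) : ℝ) + α - 1) (α + k - 1) * f (a + j) := by
    intro k hk
    have step1 : ∀ j ∈ Finset.range (n - k + 1),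
        fall ((a + n) + α - (a + j) - 1) (α + k - 1) * f (a + j)
        = fall (((n - j : ℕ) : ℝ) + α - 1) (α + k - 1) * f (a + j) := by
      intro j hj
      rw [Finset.mem_range] at hj
      rw [show (a + (n:ℝ)) + α - (a + j) - 1 = ((n - j : ℕ) : ℝ) + α - 1 by
        rw [Nat.cast_sub (by omega : j ≤ n)]; ring]
    rw [Finset.sum_congr rfl step1]
    apply Finset.sum_subset (Finset.range_subset_range.mpr (by omega))
    intro j hj hj'
    rw [Finset.mem_range] at hj hj'
    rw [fall_zero (by omega : n - j < k) α, zero_mul]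
  calc deltaSum a α (f * g) n
      = ∑ j ∈ Finset.range (n + 1),
          (1 / Real.Gamma α) * (fall (((n - j : ℕ) : ℝ) + α - 1) (α - 1) * (f (a + j) * g (a + j))) := by
        unfold deltaSum
        rw [Finset.mul_sum]
        refine Finset.sum_congr rfl fun j hj => ?_
        rw [Finset.mem_range] at hj
        rw [show (a + (n:ℝ)) + α - (a + j) - 1 = ((n - j : ℕ) : ℝ) + α - 1 by
          rw [Nat.cast_sub (by omega : j ≤ n)]; ring]
        simp [Pi.mul_apply]
    _ = ∑ j ∈ Finset.range (n + 1), ∑ k ∈ Finset.range (n + 1),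
          binomR (-α) (k : ℝ) * (bdiff^[k] g) (a + n) *
            ((1 / Real.Gamma (α + k)) *
              (fall (((n - j : ℕ) : ℝ) + α - 1) (α + k - 1) * f (a + j))) := by
        refine Finset.sum_congr rfl fun j hj => ?_
        rw [Finset.mem_range] at hj
        -- per-j identity
        set m := n - j with hm
        have hjn : j ≤ n := by omega
        have hmn : m ≤ n := by omega
        -- shrink k-sum to range (m+1)
        rw [show (∑ k ∈ Finset.range (n + 1),
              binomR (-α) (k : ℝ) * (bdiff^[k] g) (a + n) *
                ((1 / Real.Gamma (α + k)) *
                  (fall ((m : ℝ) + α - 1) (α + k - 1) * f (a + j))))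
            = ∑ k ∈ Finset.range (m + 1),
              binomR (-α) (k : ℝ) * (bdiff^[k] g) (a + n) *
                ((1 / Real.Gamma (α + k)) *
                  (fall ((m : ℝ) + α - 1) (α + k - 1) * f (a + j))) from
          (Finset.sum_subset (Finset.range_subset_range.mpr (by omega)) (by
            intro k hk hk'
            rw [Finset.mem_range] at hk hk'
            rw [fall_zero (by omega : m < k) α]
            ring)).symm]
        -- express g (a + j) via shift_sum
        have hg : g (a + j) = ∑ k ∈ Finset.range (m + 1),
            (-1 : ℝ)^k * (m.choose k) * (bdiff^[k] g) (a + n) := by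
          rw [show a + (j:ℝ) = (a + n) - (m : ℕ) by
            rw [hm, Nat.cast_sub hjn]; ring]
          exact shift_sum (a + n) m g
        have hf0 : fall ((m:ℝ) + α - 1) (α - 1) = Real.Gamma ((m:ℝ) + α) / (m.factorial : ℝ) := by
          simpa using fall_fact (Nat.zero_le m) α
        rw [hg, hf0]
        simp only [Finset.mul_sum]
        refine (Finset.sum_congr rfl fun k hk => ?_).symm
        rw [Finset.mem_range] at hk
        have hkm : k ≤ m := by omega
        rw [fall_fact hkm α, binom_eq α hα₀ hα₁ k]
        have key : ((m.choose k : ℝ)) * (k.factorial : ℝ) * (((m - k).factorial : ℝ)) = (m.factorial : ℝ) := by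
          exact_mod_cast Nat.choose_mul_factorial_mul_factorial hkm
        have hΓk : Real.Gamma (α + k) ≠ 0 := by
          apply ne_of_gt; apply Real.Gamma_pos_of_pos; positivity
        have hf1 : (k.factorial : ℝ) ≠ 0 := by exact_mod_cast k.factorial_ne_zero
        have hf2 : ((m - k).factorial : ℝ) ≠ 0 := by exact_mod_cast (m - k).factorial_ne_zero
        have hf3 : (m.factorial : ℝ) ≠ 0 := by exact_mod_cast m.factorial_ne_zero
        field_simp
        rw [← key]
        ring
    _ = ∑ k ∈ Finset.range (n + 1),
          binomR (-α) (k : ℝ) * (bdiff^[k] g) (a + n) *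
            ((1 / Real.Gamma (α + k)) * ∑ j ∈ Finset.range (n - k + 1),
              fall ((a + n) + α - (a + j) - 1) (α + k - 1) * f (a + j)) := by
        rw [Finset.sum_comm]
        refine Finset.sum_congr rfl fun k hk => ?_
        rw [Finset.mem_range] at hk
        rw [hext k (by omega), Finset.mul_sum, Finset.mul_sum]
end

section
/- Leibniz formula for the nabla fractional sum: let f, g be real functions on the grid {a, a+1, a+2, …}, let 0 < β < 1, and n ∈ ℕ with t = a + n. Then (∇_a^{−β}(f·g))(t) = Σ_{k=0}^{n} binom(−β,k)·(∇^k g)(t)·[(1/Γ(β+k)) Σ_{j=0}^{n−k} (t+β−(a+j)−1)^(β+k−1) f(a+j)], where f·g is the pointwise product. -/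
open Finset

lemma bdiff_iter (g : ℝ → ℝ) (k : ℕ) (t : ℝ) :
    bdiff^[k] g t = ∑ i ∈ range (k + 1), (-1 : ℝ) ^ i * (k.choose i) * g (t - i) := by
  induction k generalizing t with
  | zero => simp
  | succ k ih =>
      have hC : ∑ i ∈ range (k+2), (-1:ℝ)^i * ((k+1).choose i) * g (t - i)
          = (∑ i ∈ range (k+1), (-1:ℝ)^i * (k.choose i) * g (t - i))
            + ∑ i ∈ range (k+1), -((-1:ℝ)^i * (k.choose i) * g (t - 1 - i)) := by
        rw [Finset.sum_range_succ' (fun i => (-1:ℝ)^i * ((k+1).choose i) * g (t - i))]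
        rw [Finset.sum_range_succ' (fun i => (-1:ℝ)^i * ((k).choose i) * g (t - i))]
        have e1 : ∀ i ∈ range (k+1), (-1:ℝ)^(i+1) * (((k+1).choose (i+1)):ℝ) * g (t - ((i+1:ℕ):ℝ))
            = (-1:ℝ)^(i+1) * (((k).choose (i+1)):ℝ) * g (t - ((i+1:ℕ):ℝ))
              + -((-1:ℝ)^i * ((k.choose i):ℝ) * g (t - 1 - i)) := by
          intro i _
          rw [Nat.choose_succ_succ', show t - ((i+1:ℕ):ℝ) = t - 1 - (i:ℝ) by push_cast; ring]
          push_cast; ring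
        rw [Finset.sum_congr rfl e1, Finset.sum_add_distrib]
        have e3 : ∑ i ∈ range (k+1), (-1:ℝ)^(i+1) * ((k.choose (i+1)):ℝ) * g (t - ((i+1:ℕ):ℝ))
            = ∑ i ∈ range k, (-1:ℝ)^(i+1) * ((k.choose (i+1)):ℝ) * g (t - ((i+1:ℕ):ℝ)) := by
          rw [Finset.sum_range_succ]
          simp [Nat.choose_eq_zero_of_lt (Nat.lt_succ_self k)]
        rw [e3]
        simp only [Nat.choose_zero_right, Nat.cast_one, pow_zero, one_mul, Nat.cast_zero,
          sub_zero]
        ring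
      rw [Function.iterate_succ_apply', bdiff, ih t, ih (t-1), hC, Finset.sum_neg_distrib]
      ring

lemma gamma_prod (β : ℝ) (hβ₀ : 0 < β) (k : ℕ) :
    Real.Gamma (1 - β - k) * Real.Gamma (β + k)
      = (-1 : ℝ) ^ k * (Real.Gamma (1 - β) * Real.Gamma β) := by
  induction k with
  | zero => simp
  | succ k ih =>
      push_cast
      have h1 : (β : ℝ) + k ≠ 0 := by positivity
      have h2 : (-β : ℝ) - k ≠ 0 := by
        have : (0:ℝ) < β + k := by positivity
        intro h; nlinarith
      have e1 : Real.Gamma (β + ((k:ℝ) + 1)) = (β + k) * Real.Gamma (β + k) := by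
        rw [show β + ((k:ℝ) + 1) = (β + k) + 1 by ring, Real.Gamma_add_one h1]
      have e3 : Real.Gamma (1 - β - ((k:ℝ)+1)) = Real.Gamma (1 - β - k) / (-β - k) := by
        have e2 : Real.Gamma (1 - β - (k:ℝ)) = (-β - k) * Real.Gamma (1 - β - ((k:ℝ)+1)) := by
          rw [show (1:ℝ) - β - k = (-β - k) + 1 by ring, Real.Gamma_add_one h2]
          ring_nf
        rw [e2]; field_simp
      rw [e1, e3]
      field_simp
      rw [show (-1:ℝ)^(k+1) = (-1)^k * (-1) by ring]
      nlinarith [ih]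

lemma gammaZero (p q : ℕ) (h : q < p) : Real.Gamma ((q : ℝ) - p + 1) = 0 := by
  have e : ((q : ℝ) - p + 1) = -(((p - q - 1 : ℕ)) : ℝ) := by
    push_cast [Nat.cast_sub (by omega : q + 1 ≤ p), Nat.cast_sub (by omega : q ≤ p),
      Nat.cast_sub (by omega : 1 ≤ p - q)]
    ring
  rw [e]
  exact Real.Gamma_neg_nat_eq_zero _

lemma alt_sum (M : ℕ) :
    ∑ l ∈ range (M + 1), (-1 : ℝ) ^ l / (l.factorial * (M - l).factorial)
      = if M = 0 then 1 else 0 := by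
  have key : ∑ l ∈ range (M + 1), (-1 : ℝ) ^ l * (M.choose l)
      = if M = 0 then 1 else 0 := by
    have h0 := Int.alternating_sum_range_choose (n := M)
    have h2 := congrArg (fun z : ℤ => (z : ℝ)) h0
    push_cast at h2
    convert h2 using 2
  have e : ∀ l ∈ range (M + 1), (-1 : ℝ) ^ l / (l.factorial * (M - l).factorial)
      = ((-1 : ℝ) ^ l * (M.choose l)) / M.factorial := by
    intro l hl
    have hlM : l ≤ M := by simpa [Nat.lt_succ_iff] using hl
    have h3 : ((M.choose l : ℝ) * l.factorial) * (M - l).factorial = M.factorial := by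
      exact_mod_cast congrArg (fun z : ℕ => (z : ℝ)) (Nat.choose_mul_factorial_mul_factorial hlM)
    have hl1 : (l.factorial : ℝ) ≠ 0 := by positivity
    have hl2 : ((M - l).factorial : ℝ) ≠ 0 := by positivity
    have hl3 : (M.factorial : ℝ) ≠ 0 := by positivity
    rw [div_eq_div_iff (by positivity) (by positivity)]
    linear_combination (-(-1 : ℝ) ^ l) * h3
  rw [Finset.sum_congr rfl e, ← Finset.sum_div, key]
  split_ifs with h
  · subst h; simp
  · simp

lemma sumE (n m i : ℕ) (hm : m ≤ n) (hi : i ≤ n) :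
    ∑ k ∈ range (n + 1),
        (-1 : ℝ) ^ k * (k.choose i) / k.factorial * (1 / Real.Gamma ((m : ℝ) - k + 1))
      = if i = m then (-1 : ℝ) ^ m / m.factorial else 0 := by
  set F : ℕ → ℝ :=
    fun k => (-1 : ℝ) ^ k * (k.choose i) / k.factorial * (1 / Real.Gamma ((m : ℝ) - k + 1))
    with hF
  have hfilter : ∑ k ∈ (range (n + 1)).filter (fun k => i ≤ k ∧ k ≤ m), F k
      = ∑ k ∈ range (n + 1), F k := by
    refine Finset.sum_filter_of_ne fun k hk hne => ?_
    constructor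
    · by_contra hik
      apply hne
      rw [hF]
      simp [Nat.choose_eq_zero_of_lt (by omega : k < i)]
    · by_contra hkm
      apply hne
      rw [hF]
      simp [gammaZero k m (by omega)]
  have hIcc : (range (n + 1)).filter (fun k => i ≤ k ∧ k ≤ m) = Finset.Icc i m := by
    ext k; simp [Nat.lt_succ_iff]; omega
  rw [← hfilter, hIcc]
  by_cases him : i ≤ m
  · rw [← Finset.Ico_add_one_right_eq_Icc, Finset.sum_Ico_eq_sum_range]
    have hr : m + 1 - i = (m - i) + 1 := by omega
    rw [hr]
    have hterm : ∀ l ∈ range ((m - i) + 1),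
        F (i + l) = ((-1 : ℝ) ^ i / i.factorial) *
          ((-1 : ℝ) ^ l / (l.factorial * ((m - i) - l).factorial)) := by
      intro l hl
      have hlmi : l ≤ m - i := by simpa [Nat.lt_succ_iff] using hl
      have hgam : Real.Gamma ((m : ℝ) - ((i + l : ℕ) : ℝ) + 1) = (((m - i) - l).factorial : ℝ) := by
        have : ((m : ℝ) - ((i + l : ℕ) : ℝ) + 1) = (((m - i - l : ℕ) : ℝ) + 1) := by
          push_cast [Nat.cast_sub (by omega : i + l ≤ m), Nat.cast_sub (by omega : i ≤ m),
            Nat.cast_sub (by omega : l ≤ m - i)]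
          ring
        rw [this, Real.Gamma_nat_eq_factorial]
      have hch : ((i + l).choose i : ℝ) * i.factorial * l.factorial
          = ((i + l).factorial : ℝ) := by
        have h0 := Nat.choose_mul_factorial_mul_factorial (Nat.le_add_right i l)
        rw [Nat.add_sub_cancel_left] at h0
        exact_mod_cast congrArg (fun z : ℕ => (z : ℝ)) h0
      simp only [hF]
      rw [hgam]
      have hi1 : (i.factorial : ℝ) ≠ 0 := by positivity
      have hl1 : (l.factorial : ℝ) ≠ 0 := by positivity
      have hil1 : ((i + l).factorial : ℝ) ≠ 0 := by positivity
      have hml1 : (((m - i) - l).factorial : ℝ) ≠ 0 := by positivity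
      rw [pow_add]
      field_simp
      linear_combination hch
    rw [Finset.sum_congr rfl hterm, ← Finset.mul_sum, alt_sum (m - i)]
    by_cases heq : i = m
    · subst heq; simp
    · have : m - i ≠ 0 := by omega
      simp [heq, this]
  · have h1 : Finset.Icc i m = ∅ := by
      rw [Finset.Icc_eq_empty]; omega
    rw [h1]
    have : i ≠ m := by omega
    simp [this]

/-- Leibniz formula for the nabla fractional sum. -/
theorem nabla_leibniz (a β : ℝ) (hβ₀ : 0 < β) (hβ₁ : β < 1) (f g : ℝ → ℝ) (n : ℕ) :
    nablaSum a β (f * g) n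
      = ∑ k ∈ Finset.range (n + 1),
          binomR (-β) (k : ℝ) * (bdiff^[k] g) (a + n) *
            ((1 / Real.Gamma (β + k)) * ∑ j ∈ Finset.range (n - k + 1),
              fall ((a + n) + β - (a + j) - 1) (β + k - 1) * f (a + j)) := by
  have hβ1 : (0:ℝ) < 1 - β := by linarith
  have hΓβ : Real.Gamma β ≠ 0 := (Real.Gamma_pos_of_pos hβ₀).ne'
  have hΓ1β : Real.Gamma (1 - β) ≠ 0 := (Real.Gamma_pos_of_pos hβ1).ne'
  set T : ℕ → ℕ → ℕ → ℝ := fun k i j =>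
    ((-1:ℝ)^k * (k.choose i) / k.factorial * (1 / Real.Gamma (((n-j:ℕ):ℝ) - k + 1)))
      * (((-1:ℝ)^i * g (a + n - i)) * (Real.Gamma (((n-j:ℕ):ℝ) + β) / Real.Gamma β * f (a + j)))
    with hT
  have step1 : ∀ k ∈ range (n+1),
      binomR (-β) (k:ℝ) * (bdiff^[k] g) (a+n) *
        ((1 / Real.Gamma (β + k)) * ∑ j ∈ range (n - k + 1),
          fall ((a+n)+β-(a+j)-1) (β+k-1) * f (a+j))
      = ∑ i ∈ range (n+1), ∑ j ∈ range (n+1), T k i j := by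
    intro k hk
    have hkn : k ≤ n := by simpa [Nat.lt_succ_iff] using hk
    have hΓβk : Real.Gamma (β + k) ≠ 0 := (Real.Gamma_pos_of_pos (by positivity)).ne'
    have hgp := gamma_prod β hβ₀ k
    have hΓ1βk : Real.Gamma (1 - β - k) ≠ 0 := by
      intro h
      rw [h, zero_mul] at hgp
      have h2 : ((-1:ℝ)^k) * (Real.Gamma (1-β) * Real.Gamma β) ≠ 0 := by
        apply mul_ne_zero (pow_ne_zero _ (by norm_num)) (mul_ne_zero hΓ1β hΓβ)
      exact h2 hgp.symm
    have hk0 : (k.factorial : ℝ) ≠ 0 := by positivity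
    have ha : binomR (-β) (k:ℝ) * (1 / Real.Gamma (β + k))
        = (-1:ℝ)^k / (k.factorial * Real.Gamma β) := by
      rw [binomR, show (-β) + 1 = 1 - β by ring, show (-β) - (k:ℝ) + 1 = 1 - β - k by ring,
        Real.Gamma_nat_eq_factorial]
      rw [div_mul_div_comm, mul_one, div_eq_div_iff (by
        exact mul_ne_zero (mul_ne_zero hk0 hΓ1βk) hΓβk) (mul_ne_zero hk0 hΓβ)]
      have hneg : (-1:ℝ)^k * (-1:ℝ)^k = 1 := by
        rw [← pow_add, ← two_mul, pow_mul]; norm_num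
      linear_combination (-(-1:ℝ)^k * (k.factorial:ℝ)) * hgp
        + (-((k.factorial:ℝ) * (Real.Gamma (1-β) * Real.Gamma β))) * hneg
    have hb : ∀ j ∈ range (n - k + 1),
        fall ((a+(n:ℝ))+β-(a+(j:ℝ))-1) (β+(k:ℝ)-1) * f (a+(j:ℝ))
        = Real.Gamma (((n-j:ℕ):ℝ) + β) / Real.Gamma (((n-j:ℕ):ℝ) - (k:ℝ) + 1) * f (a + j) := by
      intro j hj
      have hjn : j ≤ n := by
        have : j ≤ n - k := by simpa [Nat.lt_succ_iff] using hj
        omega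
      rw [fall, show (a+(n:ℝ))+β-(a+(j:ℝ))-1+1 = ((n-j:ℕ):ℝ) + β by
          push_cast [Nat.cast_sub hjn]; ring,
        show ((n-j:ℕ):ℝ) + β - (β+(k:ℝ)-1) = ((n-j:ℕ):ℝ) - (k:ℝ) + 1 by ring]
    rw [Finset.sum_congr rfl hb]
    have hc : ∑ j ∈ range (n - k + 1),
        Real.Gamma (((n-j:ℕ):ℝ) + β) / Real.Gamma (((n-j:ℕ):ℝ) - (k:ℝ) + 1) * f (a + j)
        = ∑ j ∈ range (n + 1),
        Real.Gamma (((n-j:ℕ):ℝ) + β) / Real.Gamma (((n-j:ℕ):ℝ) - (k:ℝ) + 1) * f (a + j) := by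
      apply Finset.sum_subset (Finset.range_subset_range.mpr (by omega))
      intro j hj hnj
      have h1 : n - j < k := by
        simp only [Finset.mem_range, Nat.lt_succ_iff] at hj hnj
        omega
      rw [gammaZero k (n - j) h1]
      simp
    rw [hc, bdiff_iter]
    have hd : ∑ i ∈ range (k + 1), (-1:ℝ)^i * (k.choose i) * g ((a+(n:ℝ)) - i)
        = ∑ i ∈ range (n + 1), (-1:ℝ)^i * (k.choose i) * g ((a+(n:ℝ)) - i) := by
      apply Finset.sum_subset (Finset.range_subset_range.mpr (by omega))
      intro i hi hni
      have h1 : k < i := by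
        simp only [Finset.mem_range, Nat.lt_succ_iff] at hi hni
        omega
      simp [Nat.choose_eq_zero_of_lt h1]
    rw [hd]
    rw [show binomR (-β) (k:ℝ) * (∑ i ∈ range (n + 1), (-1:ℝ)^i * (k.choose i) * g ((a+(n:ℝ)) - i))
          * ((1 / Real.Gamma (β + k)) * ∑ j ∈ range (n + 1),
              Real.Gamma (((n-j:ℕ):ℝ) + β) / Real.Gamma (((n-j:ℕ):ℝ) - (k:ℝ) + 1) * f (a + j))
        = (binomR (-β) (k:ℝ) * (1 / Real.Gamma (β + k)))
          * ((∑ i ∈ range (n + 1), (-1:ℝ)^i * (k.choose i) * g ((a+(n:ℝ)) - i))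
            * ∑ j ∈ range (n + 1),
              Real.Gamma (((n-j:ℕ):ℝ) + β) / Real.Gamma (((n-j:ℕ):ℝ) - (k:ℝ) + 1) * f (a + j))
        by ring, ha, Finset.sum_mul_sum, Finset.mul_sum]
    refine Finset.sum_congr rfl fun i _ => ?_
    rw [Finset.mul_sum]
    refine Finset.sum_congr rfl fun j _ => ?_
    rw [hT]
    field_simp
  rw [Finset.sum_congr rfl step1, Finset.sum_comm]
  have swap2 : ∀ i ∈ range (n+1), ∑ k ∈ range (n+1), ∑ j ∈ range (n+1), T k i j
      = ∑ j ∈ range (n+1), ∑ k ∈ range (n+1), T k i j := fun i _ => Finset.sum_comm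
  rw [Finset.sum_congr rfl swap2, Finset.sum_comm]
  have stepE : ∀ j ∈ range (n+1), ∀ i ∈ range (n+1),
      ∑ k ∈ range (n+1), T k i j
        = if i = n - j then
            ((-1:ℝ)^(n-j) / (n-j).factorial)
              * (((-1:ℝ)^i * g (a + (n:ℝ) - i))
                * (Real.Gamma (((n-j:ℕ):ℝ) + β) / Real.Gamma β * f (a + j)))
          else 0 := by
    intro j hj i hi
    have hin : i ≤ n := by simpa [Nat.lt_succ_iff] using hi
    have hsum : ∑ k ∈ range (n+1), T k i j
        = (∑ k ∈ range (n+1),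
            (-1:ℝ)^k * (k.choose i) / k.factorial * (1 / Real.Gamma (((n-j:ℕ):ℝ) - k + 1)))
          * (((-1:ℝ)^i * g (a + (n:ℝ) - i))
            * (Real.Gamma (((n-j:ℕ):ℝ) + β) / Real.Gamma β * f (a + j))) := by
      rw [Finset.sum_mul]
    rw [hsum, sumE n (n-j) i (Nat.sub_le n j) hin]
    split_ifs with h
    · ring
    · ring
  have collapse : ∀ j ∈ range (n+1),
      ∑ i ∈ range (n+1), ∑ k ∈ range (n+1), T k i j
        = ((-1:ℝ)^(n-j) / (n-j).factorial)
            * (((-1:ℝ)^(n-j) * g (a + (n:ℝ) - ((n-j:ℕ):ℝ)))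
              * (Real.Gamma (((n-j:ℕ):ℝ) + β) / Real.Gamma β * f (a + j))) := by
    intro j hj
    rw [Finset.sum_congr rfl (stepE j hj)]
    rw [Finset.sum_ite_eq' (range (n+1)) (n-j)
      (fun i => ((-1:ℝ)^(n-j) / (n-j).factorial)
        * (((-1:ℝ)^i * g (a + (n:ℝ) - i))
          * (Real.Gamma (((n-j:ℕ):ℝ) + β) / Real.Gamma β * f (a + j))))]
    have : n - j ∈ range (n+1) := by
      simp [Nat.lt_succ_iff]
    simp [this]
  rw [Finset.sum_congr rfl collapse, nablaSum, Finset.mul_sum]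
  refine Finset.sum_congr rfl fun j hj => ?_
  have hjn : j ≤ n := by simpa [Nat.lt_succ_iff] using hj
  have hgj : g (a + (n:ℝ) - ((n-j:ℕ):ℝ)) = g (a + (j:ℝ)) := by
    rw [show a + (n:ℝ) - ((n-j:ℕ):ℝ) = a + (j:ℝ) by push_cast [Nat.cast_sub hjn]; ring]
  have hrise : rise ((a+(n:ℝ)) - (a+(j:ℝ)) + 1) (β - 1)
      = Real.Gamma (((n-j:ℕ):ℝ) + β) / ((n-j).factorial : ℝ) := by
    rw [rise, show (a+(n:ℝ)) - (a+(j:ℝ)) + 1 + (β - 1) = ((n-j:ℕ):ℝ) + β by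
        push_cast [Nat.cast_sub hjn]; ring,
      show (a+(n:ℝ)) - (a+(j:ℝ)) + 1 = ((n-j:ℕ):ℝ) + 1 by push_cast [Nat.cast_sub hjn]; ring,
      Real.Gamma_nat_eq_factorial]
  rw [hrise, hgj, Pi.mul_apply]
  have hs : (-1:ℝ)^(n-j) * (-1:ℝ)^(n-j) = 1 := by
    rw [← pow_add, ← two_mul, pow_mul]
    norm_num
  have key : (-1:ℝ)^(n-j) / ((n-j).factorial : ℝ)
        * (((-1:ℝ)^(n-j) * g (a + (j:ℝ)))
          * (Real.Gamma (((n-j:ℕ):ℝ) + β) / Real.Gamma β * f (a + (j:ℝ))))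
      = ((-1:ℝ)^(n-j) * (-1:ℝ)^(n-j))
        * (1 / Real.Gamma β * (Real.Gamma (((n-j:ℕ):ℝ) + β) / ((n-j).factorial : ℝ)
            * (f (a + (j:ℝ)) * g (a + (j:ℝ))))) := by ring
  rw [key, hs, one_mul]
end
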